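/- arXiv:1707.01569 — 10 statements merged into one kernel-verified Lean document; each statement's English description precedes it below -/
import Mathlib

section
/- Let f = h + conj(g) be a sense-preserving harmonic mapping in the unit disk D with dilatation ω = g'/h'. Then for every ε in the closed unit disk and every z in D, the pre-Schwarzian derivatives satisfy P_{h+εg}(z) - P_f(z) = ((ε + conj(ω(z)))/(1 + ε ω(z))) · (ω'(z)/(1 - |ω(z)|²)). -/
set_option maxHeartbeats 1000000


open Complex Metric

/-- Pre-Schwarzian derivative of an analytic function. -/
noncomputable def pd (F : ℂ → ℂ) (z : ℂ) : ℂ := deriv (deriv F) z / deriv F z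

/-- Dilatation of the harmonic mapping `h + conj g`. -/
noncomputable def dil (h g : ℂ → ℂ) (z : ℂ) : ℂ := deriv g z / deriv h z

/-- Pre-Schwarzian derivative of the harmonic mapping `h + conj g`. -/
noncomputable def PH (h g : ℂ → ℂ) (z : ℂ) : ℂ :=
  pd h z - (starRingEnd ℂ) (dil h g z) * deriv (dil h g) z / ((1 - ‖dil h g z‖ ^ 2 : ℝ) : ℂ)

/-- Pre-Schwarzian norm. -/
noncomputable def pnorm (P : ℂ → ℂ) : ℝ :=
  ⨆ z : Metric.ball (0 : ℂ) 1, (1 - ‖(z : ℂ)‖ ^ 2) * ‖P (z : ℂ)‖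

/-- The range whose boundedness expresses finiteness of the pre-Schwarzian norm. -/
def pbdd (P : ℂ → ℂ) : Prop :=
  BddAbove (Set.range fun z : Metric.ball (0 : ℂ) 1 => (1 - ‖(z : ℂ)‖ ^ 2) * ‖P (z : ℂ)‖)

/-- `h + conj g` is a sense-preserving harmonic mapping in the unit disk. -/
def SPH (h g : ℂ → ℂ) : Prop :=
  DifferentiableOn ℂ h (Metric.ball (0 : ℂ) 1) ∧
  DifferentiableOn ℂ g (Metric.ball (0 : ℂ) 1) ∧ g 0 = 0 ∧
  ∀ z ∈ Metric.ball (0 : ℂ) 1, ‖deriv g z‖ < ‖deriv h z‖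

private lemma key_alg (A B H ε ω c : ℂ) (hH : H ≠ 0) (h1 : 1 + ε * ω ≠ 0)
    (h2 : 1 - ω * c ≠ 0) (hden : H + ε * (ω * H) ≠ 0) :
    (A + ε * B) / (H + ε * (ω * H)) -
        (A / H - c * ((B * H - ω * H * A) / H ^ 2) / (1 - ω * c)) =
      ((ε + c) / (1 + ε * ω)) * (((B * H - ω * H * A) / H ^ 2) / (1 - ω * c)) := by
  rw [show H + ε * (ω * H) = H * (1 + ε * ω) by ring]
  have hD : ε * H ^ 4 * ω - ε * H ^ 4 * ω ^ 2 * c + (H ^ 4 - H ^ 4 * ω * c) ≠ 0 := by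
    rw [show ε * H ^ 4 * ω - ε * H ^ 4 * ω ^ 2 * c + (H ^ 4 - H ^ 4 * ω * c)
        = H ^ 4 * ((1 + ε * ω) * (1 - ω * c)) by ring]
    exact mul_ne_zero (pow_ne_zero _ hH) (mul_ne_zero h1 h2)
  field_simp
  ring

theorem stmt0 (h g : ℂ → ℂ) (hf : SPH h g) :
    ∀ ε : ℂ, ‖ε‖ ≤ 1 → ∀ z ∈ Metric.ball (0 : ℂ) 1,
      pd (fun w => h w + ε * g w) z - PH h g z =
        ((ε + (starRingEnd ℂ) (dil h g z)) / (1 + ε * dil h g z)) *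
          (deriv (dil h g) z / ((1 - ‖dil h g z‖ ^ 2 : ℝ) : ℂ)):= by
  obtain ⟨hh, hg, -, hsp⟩ := hf
  intro ε hε z hz
  have hob : IsOpen (Metric.ball (0:ℂ) 1) := isOpen_ball
  have hmem : Metric.ball (0:ℂ) 1 ∈ nhds z := hob.mem_nhds hz
  have hha : AnalyticOnNhd ℂ h (Metric.ball (0:ℂ) 1) := hh.analyticOnNhd hob
  have hga : AnalyticOnNhd ℂ g (Metric.ball (0:ℂ) 1) := hg.analyticOnNhd hob
  have hHa : AnalyticOnNhd ℂ (deriv h) (Metric.ball (0:ℂ) 1) := hha.deriv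
  have hGa : AnalyticOnNhd ℂ (deriv g) (Metric.ball (0:ℂ) 1) := hga.deriv
  set A := deriv (deriv h) z with hA
  set B := deriv (deriv g) z with hB
  set H := deriv h z with hHdef
  set G := deriv g z with hGdef
  have hGH : ‖G‖ < ‖H‖ := hsp z hz
  have hHz : H ≠ 0 := by
    intro h0
    rw [h0] at hGH
    simp at hGH
    exact absurd hGH (not_lt.mpr (norm_nonneg G))
  -- derivative of the analytic part of the perturbed map
  have hFd : ∀ w ∈ Metric.ball (0:ℂ) 1,
      deriv (fun w => h w + ε * g w) w = deriv h w + ε * deriv g w := by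
    intro w hw
    have hhd : DifferentiableAt ℂ h w := (hha w hw).differentiableAt
    have hgd : DifferentiableAt ℂ g w := (hga w hw).differentiableAt
    rw [deriv_fun_add hhd (hgd.const_mul ε), deriv_const_mul ε hgd]
  have hev : deriv (fun w => h w + ε * g w) =ᶠ[nhds z] fun w => deriv h w + ε * deriv g w :=
    Filter.eventuallyEq_of_mem hmem hFd
  have hHd : DifferentiableAt ℂ (deriv h) z := (hHa z hz).differentiableAt
  have hGd : DifferentiableAt ℂ (deriv g) z := (hGa z hz).differentiableAt
  have hd2 : deriv (deriv (fun w => h w + ε * g w)) z = A + ε * B := by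
    rw [hev.deriv_eq, deriv_fun_add hHd (hGd.const_mul ε), deriv_const_mul ε hGd]
  -- derivative of the dilatation
  have hdil : dil h g = fun w => deriv g w / deriv h w := rfl
  have hdd : deriv (dil h g) z = (B * H - G * A) / H ^ 2 := by
    rw [hdil]
    exact deriv_div hGd hHd hHz
  -- nonvanishing facts
  have hden : H + ε * G ≠ 0 := by
    intro heq
    have h1 : ε * G = -H := by linear_combination heq
    have h2 : ‖ε * G‖ = ‖H‖ := by rw [h1, norm_neg]
    have h3 : ‖ε * G‖ ≤ ‖G‖ := by
      rw [norm_mul]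
      nlinarith [norm_nonneg G]
    linarith
  have homega : dil h g z = G / H := rfl
  have hHpos : (0:ℝ) < ‖H‖ := norm_pos_iff.mpr hHz
  have hωlt : ‖G / H‖ < 1 := by
    rw [norm_div, div_lt_one hHpos]
    exact hGH
  have hcast' : ((1 - ‖G / H‖ ^ 2 : ℝ) : ℂ) = 1 - (G / H) * (starRingEnd ℂ) (G / H) := by
    rw [Complex.ofReal_sub, Complex.ofReal_one, Complex.ofReal_pow, Complex.mul_conj']
  have hsqne : (1 : ℂ) - (G / H) * (starRingEnd ℂ) (G / H) ≠ 0 := by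
    rw [← hcast', Ne, Complex.ofReal_eq_zero]
    nlinarith [norm_nonneg (G / H)]
  have h1ne : (1 : ℂ) + ε * (G / H) ≠ 0 := by
    have he : (1 : ℂ) + ε * (G / H) = (H + ε * G) / H := by field_simp
    rw [he]
    exact div_ne_zero hden hHz
  simp only [pd, PH, homega, hd2, hdd, hFd z hz, ← hHdef, ← hGdef, ← hA, ← hB, hcast']
  have hden' : H + ε * (G / H * H) ≠ 0 := by
    rw [div_mul_cancel₀ G hHz]
    exact hden
  have hkey := key_alg A B H ε (G / H) ((starRingEnd ℂ) (G / H)) hHz h1ne hsqne hden'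
  rw [div_mul_cancel₀ G hHz] at hkey
  exact hkey
end

section
/- Let f = h + conj(g) be a sense-preserving harmonic mapping in the unit disk D. Then for every ε in the closed unit disk and every z in D, (1-|z|²)·| |P_{h+εg}(z)| - |P_f(z)| | ≤ 1. Consequently, if the pre-Schwarzian norm ||P_f|| = sup_{z∈D}(1-|z|²)|P_f(z)| is finite, then | ||P_{h+εg}|| - ||P_f|| | ≤ 1. -/
open Complex Metric

lemma norm_sq_mob (a w : ℂ) :
    ‖1 + (starRingEnd ℂ) a * w‖^2 - ‖w + a‖^2 = (1-‖a‖^2)*(1-‖w‖^2) := by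
  have h : ∀ z : ℂ, ‖z‖^2 = z.re^2 + z.im^2 := by
    intro z
    rw [Complex.sq_norm, Complex.normSq_apply]; ring
  simp only [h, Complex.add_re, Complex.add_im, Complex.mul_re, Complex.mul_im,
    Complex.one_re, Complex.one_im, Complex.conj_re, Complex.conj_im]
  ring

lemma ofReal_norm_sq (z : ℂ) : ((‖z‖^2 : ℝ) : ℂ) = z * (starRingEnd ℂ) z := by
  rw [Complex.mul_conj]
  norm_cast
  rw [Complex.sq_norm]

lemma one_add_ne {x : ℂ} (hx : ‖x‖ < 1) : 1 + x ≠ 0 := by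
  intro h
  have : x = -1 := by linear_combination h
  rw [this] at hx; norm_num at hx

lemma schwarz_pick (ω : ℂ → ℂ) (hd : DifferentiableOn ℂ ω (ball 0 1))
    (hm : Set.MapsTo ω (ball 0 1) (ball 0 1)) {a : ℂ} (ha : a ∈ ball (0:ℂ) 1) :
    (1 - ‖a‖^2) * ‖deriv ω a‖ ≤ 1 - ‖ω a‖^2 := by
  set b := ω a with hbdef
  have hb : b ∈ ball (0:ℂ) 1 := hm ha
  have ha' : ‖a‖ < 1 := mem_ball_zero_iff.mp ha
  have hb' : ‖b‖ < 1 := mem_ball_zero_iff.mp hb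
  have hsb : (0:ℝ) < 1 - ‖b‖^2 := by nlinarith [norm_nonneg b]
  have hsa : (0:ℝ) < 1 - ‖a‖^2 := by nlinarith [norm_nonneg a]
  set σ : ℂ → ℂ := fun w => (w + a)/(1 + (starRingEnd ℂ) a * w) with hσdef
  set τ : ℂ → ℂ := fun u => (u - b)/(1 - (starRingEnd ℂ) b * u) with hτdef
  have hσden : ∀ w ∈ ball (0:ℂ) 1, (1 + (starRingEnd ℂ) a * w) ≠ 0 := by
    intro w hw
    rw [mem_ball_zero_iff] at hw
    apply one_add_ne
    rw [norm_mul, RCLike.norm_conj]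
    nlinarith [norm_nonneg a, norm_nonneg w]
  have hτden : ∀ u ∈ ball (0:ℂ) 1, (1 - (starRingEnd ℂ) b * u) ≠ 0 := by
    intro u hu
    rw [mem_ball_zero_iff] at hu
    rw [sub_eq_add_neg]
    apply one_add_ne
    rw [norm_neg, norm_mul, RCLike.norm_conj]
    nlinarith [norm_nonneg b, norm_nonneg u]
  have hσmem : Set.MapsTo σ (ball 0 1) (ball 0 1) := by
    intro w hw
    have hw' : ‖w‖ < 1 := mem_ball_zero_iff.mp hw
    refine mem_ball_zero_iff.mpr ?_
    show ‖(w + a)/(1 + (starRingEnd ℂ) a * w)‖ < 1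
    have hden := hσden w hw
    have hW : (0:ℝ) < 1 - ‖w‖^2 := by nlinarith [norm_nonneg w]
    have h1 : ‖w + a‖^2 < ‖1 + (starRingEnd ℂ) a * w‖^2 := by
      have := norm_sq_mob a w
      nlinarith [mul_pos hsa hW]
    rw [norm_div, div_lt_one (norm_pos_iff.mpr hden)]
    exact lt_of_pow_lt_pow_left₀ 2 (norm_nonneg _) h1
  have hτmem : Set.MapsTo τ (ball 0 1) (ball 0 1) := by
    intro u hu
    have hu' : ‖u‖ < 1 := mem_ball_zero_iff.mp hu
    refine mem_ball_zero_iff.mpr ?_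
    show ‖(u - b)/(1 - (starRingEnd ℂ) b * u)‖ < 1
    have hden := hτden u hu
    have key := norm_sq_mob (-b) u
    simp only [map_neg, norm_neg, neg_mul] at key
    rw [← sub_eq_add_neg, ← sub_eq_add_neg] at key
    have hU : (0:ℝ) < 1 - ‖u‖^2 := by nlinarith [norm_nonneg u]
    have h1 : ‖u - b‖^2 < ‖1 - (starRingEnd ℂ) b * u‖^2 := by
      nlinarith [mul_pos hsb hU]
    rw [norm_div, div_lt_one (norm_pos_iff.mpr hden)]
    exact lt_of_pow_lt_pow_left₀ 2 (norm_nonneg _) h1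
  have hσdiff : DifferentiableOn ℂ σ (ball 0 1) := by
    apply DifferentiableOn.div
    · exact (differentiable_id.add_const a).differentiableOn
    · exact ((differentiable_id.const_mul _).const_add 1).differentiableOn
    · exact hσden
  have hτdiff : DifferentiableOn ℂ τ (ball 0 1) := by
    apply DifferentiableOn.div
    · exact (differentiable_id.sub_const b).differentiableOn
    · exact ((differentiable_const (1:ℂ)).sub (differentiable_id.const_mul _)).differentiableOn
    · exact hτden
  set ψ : ℂ → ℂ := fun w => τ (ω (σ w)) with hψdef
  have hψdiff : DifferentiableOn ℂ ψ (ball 0 1) :=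
    hτdiff.comp (hd.comp hσdiff hσmem) (hm.comp hσmem)
  have hψm : Set.MapsTo ψ (ball 0 1) (ball 0 1) :=
    fun w hw => hτmem (hm (hσmem hw))
  have hσ0 : σ 0 = a := by simp [hσdef]
  have hψ0 : ψ 0 = 0 := by
    simp [hψdef, hσ0, hτdef, ← hbdef]
  have hakey : (1:ℂ) - a * (starRingEnd ℂ) a = (((1 - ‖a‖^2 : ℝ)) : ℂ) := by
    rw [Complex.ofReal_sub, Complex.ofReal_one, ofReal_norm_sq]
  have hbkey : (1:ℂ) - (starRingEnd ℂ) b * b = (((1 - ‖b‖^2 : ℝ)) : ℂ) := by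
    rw [Complex.ofReal_sub, Complex.ofReal_one, ofReal_norm_sq]; ring
  have hbne : (((1 - ‖b‖^2 : ℝ)) : ℂ) ≠ 0 := by
    simpa using Complex.ofReal_ne_zero.mpr hsb.ne'
  -- derivative of σ at 0
  have hσd : HasDerivAt σ (((1 - ‖a‖^2 : ℝ)) : ℂ) 0 := by
    have h1 : HasDerivAt (fun w : ℂ => w + a) 1 0 := (hasDerivAt_id 0).add_const a
    have h2 : HasDerivAt (fun w : ℂ => 1 + (starRingEnd ℂ) a * w) ((starRingEnd ℂ) a) 0 := by
      simpa using ((hasDerivAt_id 0).const_mul ((starRingEnd ℂ) a)).const_add 1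
    have h3 := h1.div h2 (by simp)
    refine h3.congr_deriv ?_
    rw [← hakey]
    have : (1 * (1 + (starRingEnd ℂ) a * 0) - (0 + a) * (starRingEnd ℂ) a) /
        (1 + (starRingEnd ℂ) a * 0) ^ 2 = 1 - a * (starRingEnd ℂ) a := by ring
    rw [this]
  -- derivative of τ at b
  have hτd : HasDerivAt τ (1/(((1 - ‖b‖^2 : ℝ)) : ℂ)) b := by
    have h1 : HasDerivAt (fun u : ℂ => u - b) 1 b := (hasDerivAt_id b).sub_const b
    have h2 : HasDerivAt (fun u : ℂ => 1 - (starRingEnd ℂ) b * u) (-(starRingEnd ℂ) b) b := by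
      simpa using ((hasDerivAt_id b).const_mul ((starRingEnd ℂ) b)).const_sub 1
    have hden : (1 - (starRingEnd ℂ) b * b) ≠ 0 := hτden b hb
    have h3 := h1.div h2 hden
    rw [hbkey] at h3
    have e : (1 * (((1 - ‖b‖^2 : ℝ)) : ℂ) - (b - b) * -(starRingEnd ℂ) b) /
        (((1 - ‖b‖^2 : ℝ)) : ℂ)^2 = 1/(((1 - ‖b‖^2 : ℝ)) : ℂ) := by
      rw [sub_self, zero_mul, sub_zero, one_mul,
        div_eq_div_iff (pow_ne_zero 2 hbne) hbne]
      ring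
    rw [e] at h3
    exact h3
  have hωd_at : HasDerivAt ω (deriv ω a) a :=
    (hd.differentiableAt (isOpen_ball.mem_nhds ha)).hasDerivAt
  have hinner : HasDerivAt (fun w => ω (σ w)) (deriv ω a * (((1 - ‖a‖^2 : ℝ)) : ℂ)) 0 := by
    have h := HasDerivAt.comp 0
      (show HasDerivAt ω (deriv ω a) (σ 0) by rw [hσ0]; exact hωd_at) hσd
    exact h
  have hψd : HasDerivAt ψ (1/(((1 - ‖b‖^2 : ℝ)) : ℂ) * (deriv ω a * (((1 - ‖a‖^2 : ℝ)) : ℂ))) 0 := by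
    have hτd' : HasDerivAt τ (1/(((1 - ‖b‖^2 : ℝ)) : ℂ)) (ω (σ 0)) := by
      rw [hσ0, ← hbdef]; exact hτd
    have h := HasDerivAt.comp 0 hτd' hinner
    exact h
  have hnorm : ‖deriv ψ 0‖ ≤ 1 := by
    have hmaps : Set.MapsTo ψ (ball 0 1) (ball (ψ 0) 1) := by rw [hψ0]; exact hψm
    have := Complex.norm_deriv_le_div_of_mapsTo_ball hψdiff (hmaps.mono_right ball_subset_closedBall) one_pos
    simpa using this
  rw [hψd.deriv] at hnorm
  rw [norm_mul, norm_mul, norm_div, norm_one, Complex.norm_real, Complex.norm_real,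
    Real.norm_eq_abs, Real.norm_eq_abs, abs_of_pos hsb, abs_of_pos hsa,
    one_div_mul_eq_div, div_le_one hsb] at hnorm
  nlinarith [hnorm]

lemma alg (a b c d ε cw : ℂ) (ha : a ≠ 0) (h2 : a + ε * c ≠ 0) (h4 : a - c * cw ≠ 0) :
    ((b + ε*d)/(a + ε*c) - (b/a - cw * ((d*a - c*b)/a^2) / (1 - (c/a)*cw)))
      * ((a + ε*c) * (a - c*cw))
    = (d*a - c*b) * (ε + cw) := by
  have e2 : (1:ℂ) - (c/a)*cw = (a - c*cw)/a := by field_simp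
  have t3 : cw * ((d*a - c*b)/a^2) / ((a - c*cw)/a) = cw * (d*a - c*b) / (a * (a - c*cw)) := by
    field_simp
  rw [e2, t3]
  field_simp
  ring

theorem stmt1 (h g : ℂ → ℂ) (hf : SPH h g) :
    (∀ ε : ℂ, ‖ε‖ ≤ 1 → ∀ z ∈ Metric.ball (0 : ℂ) 1,
        (1 - ‖z‖ ^ 2) * |‖pd (fun w => h w + ε * g w) z‖ - ‖PH h g z‖| ≤ 1) ∧
    (pbdd (PH h g) → ∀ ε : ℂ, ‖ε‖ ≤ 1 →
        |pnorm (pd (fun w => h w + ε * g w)) - pnorm (PH h g)| ≤ 1) := by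
  obtain ⟨hh, hg, hg0, hlt⟩ := hf
  have hO : IsOpen (ball (0:ℂ) 1) := isOpen_ball
  have hAh : AnalyticOnNhd ℂ h (ball 0 1) := hh.analyticOnNhd hO
  have hAg : AnalyticOnNhd ℂ g (ball 0 1) := hg.analyticOnNhd hO
  have hane : ∀ z ∈ ball (0:ℂ) 1, deriv h z ≠ 0 := by
    intro z hz h0
    have := hlt z hz
    rw [h0, norm_zero] at this
    exact absurd this (not_lt.mpr (norm_nonneg _))
  have hωdiff : DifferentiableOn ℂ (dil h g) (ball 0 1) := by
    intro z hz
    exact (((hAg.deriv z hz).differentiableAt).div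
      ((hAh.deriv z hz).differentiableAt) (hane z hz)).differentiableWithinAt
  have hωm : Set.MapsTo (dil h g) (ball 0 1) (ball 0 1) := by
    intro z hz
    refine mem_ball_zero_iff.mpr ?_
    show ‖deriv g z / deriv h z‖ < 1
    rw [norm_div, div_lt_one (lt_of_le_of_lt (norm_nonneg _) (hlt z hz))]
    exact hlt z hz
  -- key pointwise bound on the difference of pre-Schwarzians
  have key : ∀ ε : ℂ, ‖ε‖ ≤ 1 → ∀ z ∈ ball (0:ℂ) 1,
      (1 - ‖z‖^2) * ‖pd (fun w => h w + ε * g w) z - PH h g z‖ ≤ 1 := by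
    intro ε hε z hz
    have hzlt : ‖z‖ < 1 := mem_ball_zero_iff.mp hz
    have ht : (0:ℝ) ≤ 1 - ‖z‖^2 := by nlinarith [norm_nonneg z]
    have ha0 : deriv h z ≠ 0 := hane z hz
    have hapos : (0:ℝ) < ‖deriv h z‖ := norm_pos_iff.mpr ha0
    have hhd : HasDerivAt h (deriv h z) z := (hh.differentiableAt (hO.mem_nhds hz)).hasDerivAt
    have hgd : HasDerivAt g (deriv g z) z := (hg.differentiableAt (hO.mem_nhds hz)).hasDerivAt
    have hh'd : HasDerivAt (deriv h) (deriv (deriv h) z) z :=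
      ((hAh.deriv z hz).differentiableAt).hasDerivAt
    have hg'd : HasDerivAt (deriv g) (deriv (deriv g) z) z :=
      ((hAg.deriv z hz).differentiableAt).hasDerivAt
    -- first derivative of h + ε g on the ball
    have hF1 : Set.EqOn (deriv (fun w => h w + ε * g w))
        (fun x => deriv h x + ε * deriv g x) (ball (0:ℂ) 1) := by
      intro x hx
      have h1 : HasDerivAt h (deriv h x) x := (hh.differentiableAt (hO.mem_nhds hx)).hasDerivAt
      have h2 : HasDerivAt g (deriv g x) x := (hg.differentiableAt (hO.mem_nhds hx)).hasDerivAt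
      exact (h1.add (h2.const_mul ε)).deriv
    have hF' : deriv (fun w => h w + ε * g w) z = deriv h z + ε * deriv g z := hF1 hz
    have hF'' : deriv (deriv (fun w => h w + ε * g w)) z
        = deriv (deriv h) z + ε * deriv (deriv g) z := by
      have heq : deriv (fun w => h w + ε * g w) =ᶠ[nhds z]
          (fun x => deriv h x + ε * deriv g x) :=
        Filter.eventuallyEq_of_mem (hO.mem_nhds hz) hF1
      rw [Filter.EventuallyEq.deriv_eq heq]
      exact (hh'd.add (hg'd.const_mul ε)).deriv
    have hω' : deriv (dil h g) z
        = (deriv (deriv g) z * deriv h z - deriv g z * deriv (deriv h) z)/(deriv h z)^2 :=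
      (hg'd.div hh'd ha0).deriv
    have hwlt : ‖deriv g z / deriv h z‖ < 1 := mem_ball_zero_iff.mp (hωm hz)
    have hs : (0:ℝ) < 1 - ‖deriv g z / deriv h z‖^2 := by
      nlinarith [norm_nonneg (deriv g z / deriv h z)]
    set cw := (starRingEnd ℂ) (deriv g z / deriv h z) with hcwdef
    have hdil : dil h g z = deriv g z / deriv h z := rfl
    have hcast : ((1 - ‖deriv g z / deriv h z‖^2 : ℝ) : ℂ)
        = 1 - (deriv g z / deriv h z) * cw := by
      rw [Complex.ofReal_sub, Complex.ofReal_one, ofReal_norm_sq, hcwdef]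
    -- nonvanishing of the factors
    have hFne : deriv h z + ε * deriv g z ≠ 0 := by
      intro e0
      have e1 : deriv h z = -(ε * deriv g z) := by linear_combination e0
      have e2 : ‖deriv h z‖ ≤ ‖deriv g z‖ := by
        rw [e1, norm_neg, norm_mul]
        calc ‖ε‖ * ‖deriv g z‖ ≤ 1 * ‖deriv g z‖ :=
              mul_le_mul_of_nonneg_right hε (norm_nonneg _)
          _ = ‖deriv g z‖ := one_mul _
      exact absurd (lt_of_le_of_lt e2 (hlt z hz)) (lt_irrefl _)
    have hcwlt : ‖deriv g z * cw‖ < ‖deriv h z‖ := by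
      rw [norm_mul, hcwdef, RCLike.norm_conj]
      calc ‖deriv g z‖ * ‖deriv g z / deriv h z‖ ≤ ‖deriv h z‖ * ‖deriv g z / deriv h z‖ :=
            mul_le_mul_of_nonneg_right (hlt z hz).le (norm_nonneg _)
        _ < ‖deriv h z‖ * 1 := by
            exact mul_lt_mul_of_pos_left hwlt hapos
        _ = ‖deriv h z‖ := mul_one _
    have h4 : deriv h z - deriv g z * cw ≠ 0 := by
      intro e0
      have e1 : deriv h z = deriv g z * cw := by linear_combination e0
      rw [← e1] at hcwlt
      exact absurd hcwlt (lt_irrefl _)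
    -- the difference identity, in product form
    have hpdF : pd (fun w => h w + ε * g w) z
        = (deriv (deriv h) z + ε * deriv (deriv g) z) / (deriv h z + ε * deriv g z) := by
      unfold pd
      rw [hF'', hF']
    have hPH : PH h g z = deriv (deriv h) z / deriv h z
        - cw * ((deriv (deriv g) z * deriv h z - deriv g z * deriv (deriv h) z)/(deriv h z)^2)
          / (1 - (deriv g z / deriv h z) * cw) := by
      unfold PH pd
      rw [hω', hdil, hcast]
    have hprod : (pd (fun w => h w + ε * g w) z - PH h g z)
        * ((deriv h z + ε * deriv g z) * (deriv h z - deriv g z * cw))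
        = (deriv (deriv g) z * deriv h z - deriv g z * deriv (deriv h) z) * (ε + cw) := by
      rw [hpdF, hPH]
      exact alg _ _ _ _ _ _ ha0 hFne h4
    -- norm facts
    have hu_eq : deriv h z + ε * deriv g z
        = deriv h z * (1 + ε * (deriv g z / deriv h z)) := by field_simp
    have hv_eq : deriv h z - deriv g z * cw
        = deriv h z * (1 - (deriv g z / deriv h z) * cw) := by
      field_simp
    have hUpos : (0:ℝ) < ‖(1:ℂ) + ε * (deriv g z / deriv h z)‖ := by
      refine norm_pos_iff.mpr ?_
      intro e0
      rw [hu_eq, e0, mul_zero] at hFne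
      exact hFne rfl
    have hnv : ‖deriv h z - deriv g z * cw‖
        = ‖deriv h z‖ * (1 - ‖deriv g z / deriv h z‖^2) := by
      rw [hv_eq, norm_mul, ← hcast, Complex.norm_real, Real.norm_eq_abs, abs_of_pos hs]
    -- key Möbius norm inequality
    have hM : ‖ε + cw‖ ≤ ‖(1:ℂ) + ε * (deriv g z / deriv h z)‖ := by
      have h9 := norm_sq_mob ((starRingEnd ℂ) ε) (deriv g z / deriv h z)
      rw [Complex.conj_conj, RCLike.norm_conj] at h9
      have hε2 : (0:ℝ) ≤ 1 - ‖ε‖^2 := by nlinarith [norm_nonneg ε]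
      have e : ε + cw = (starRingEnd ℂ) (deriv g z / deriv h z + (starRingEnd ℂ) ε) := by
        rw [map_add, Complex.conj_conj, hcwdef, add_comm]
      rw [e, RCLike.norm_conj]
      have hsq : ‖deriv g z / deriv h z + (starRingEnd ℂ) ε‖^2
          ≤ ‖(1:ℂ) + ε * (deriv g z / deriv h z)‖^2 := by nlinarith [mul_nonneg hε2 hs.le]
      exact le_of_pow_le_pow_left₀ two_ne_zero (norm_nonneg _) hsq
    -- Schwarz–Pick
    have hSP := schwarz_pick (dil h g) hωdiff hωm hz
    rw [hω', hdil] at hSP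
    rw [norm_div, norm_pow] at hSP
    have hts : (1 - ‖z‖^2) * ‖deriv (deriv g) z * deriv h z - deriv g z * deriv (deriv h) z‖
        ≤ (1 - ‖deriv g z / deriv h z‖^2) * ‖deriv h z‖^2 := by
      have h7 := mul_le_mul_of_nonneg_right hSP (sq_nonneg ‖deriv h z‖)
      have h8 : (1 - ‖z‖^2) *
          (‖deriv (deriv g) z * deriv h z - deriv g z * deriv (deriv h) z‖ / ‖deriv h z‖^2)
          * ‖deriv h z‖^2
          = (1 - ‖z‖^2) * ‖deriv (deriv g) z * deriv h z - deriv g z * deriv (deriv h) z‖ := by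
        rw [mul_assoc, div_mul_cancel₀ _ (ne_of_gt (pow_pos hapos 2))]
      rw [h8] at h7
      exact h7
    -- put it all together
    have h5 := congrArg norm hprod
    rw [norm_mul, norm_mul, hu_eq, norm_mul, hnv, norm_mul] at h5
    set t := 1 - ‖z‖^2
    set s := 1 - ‖deriv g z / deriv h z‖^2
    set U := ‖(1:ℂ) + ε * (deriv g z / deriv h z)‖
    set E := ‖ε + cw‖
    set N := ‖deriv (deriv g) z * deriv h z - deriv g z * deriv (deriv h) z‖
    set D := ‖pd (fun w => h w + ε * g w) z - PH h g z‖
    -- h5 : D * (‖a‖ * U * (‖a‖ * s)) = N * E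
    have e1 : (D * (s * ‖deriv h z‖^2)) * U ≤ N * U := by
      calc (D * (s * ‖deriv h z‖^2)) * U
          = D * (‖deriv h z‖ * U * (‖deriv h z‖ * s)) := by ring
        _ = N * E := h5
        _ ≤ N * U := mul_le_mul_of_nonneg_left hM (norm_nonneg _)
    have e2 : D * (s * ‖deriv h z‖^2) ≤ N := le_of_mul_le_mul_right e1 hUpos
    have e3 : (t * D) * (s * ‖deriv h z‖^2) ≤ 1 * (s * ‖deriv h z‖^2) := by
      calc (t * D) * (s * ‖deriv h z‖^2) = t * (D * (s * ‖deriv h z‖^2)) := by ring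
        _ ≤ t * N := mul_le_mul_of_nonneg_left e2 ht
        _ ≤ s * ‖deriv h z‖^2 := hts
        _ = 1 * (s * ‖deriv h z‖^2) := (one_mul _).symm
    exact le_of_mul_le_mul_right e3 (by positivity)
  -- part 1
  have main : ∀ ε : ℂ, ‖ε‖ ≤ 1 → ∀ z ∈ Metric.ball (0 : ℂ) 1,
      (1 - ‖z‖ ^ 2) * |‖pd (fun w => h w + ε * g w) z‖ - ‖PH h g z‖| ≤ 1 := by
    intro ε hε z hz
    have hzlt : ‖z‖ < 1 := mem_ball_zero_iff.mp hz
    have ht : (0:ℝ) ≤ 1 - ‖z‖^2 := by nlinarith [norm_nonneg z]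
    calc (1 - ‖z‖ ^ 2) * |‖pd (fun w => h w + ε * g w) z‖ - ‖PH h g z‖|
        ≤ (1 - ‖z‖ ^ 2) * ‖pd (fun w => h w + ε * g w) z - PH h g z‖ :=
          mul_le_mul_of_nonneg_left (abs_norm_sub_norm_le _ _) ht
      _ ≤ 1 := key ε hε z hz
  refine ⟨main, ?_⟩
  -- part 2
  intro hbdd ε hε
  have hnem : Nonempty ↥(Metric.ball (0:ℂ) 1) := ⟨⟨0, mem_ball_self one_pos⟩⟩
  have htz : ∀ z : Metric.ball (0:ℂ) 1, (0:ℝ) ≤ 1 - ‖(z:ℂ)‖^2 := by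
    intro z
    have : ‖(z:ℂ)‖ < 1 := mem_ball_zero_iff.mp z.2
    nlinarith [norm_nonneg (z:ℂ)]
  have hpt : ∀ z : Metric.ball (0:ℂ) 1,
      |(1 - ‖(z:ℂ)‖^2) * ‖pd (fun w => h w + ε * g w) (z:ℂ)‖
        - (1 - ‖(z:ℂ)‖^2) * ‖PH h g (z:ℂ)‖| ≤ 1 := by
    intro z
    rw [← mul_sub, abs_mul, _root_.abs_of_nonneg (htz z)]
    exact main ε hε (z:ℂ) z.2
  have hB_le : ∀ z : Metric.ball (0:ℂ) 1,
      (1 - ‖(z:ℂ)‖^2) * ‖PH h g (z:ℂ)‖ ≤ pnorm (PH h g) :=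
    fun z => le_ciSup hbdd z
  have hAbdd : BddAbove (Set.range fun z : Metric.ball (0:ℂ) 1 =>
      (1 - ‖(z:ℂ)‖^2) * ‖pd (fun w => h w + ε * g w) (z:ℂ)‖) := by
    refine ⟨pnorm (PH h g) + 1, ?_⟩
    rintro x ⟨z, rfl⟩
    have h10 := abs_le.mp (hpt z)
    have := hB_le z
    simp only at h10 ⊢
    linarith [h10.1, h10.2]
  have hA_le : ∀ z : Metric.ball (0:ℂ) 1,
      (1 - ‖(z:ℂ)‖^2) * ‖pd (fun w => h w + ε * g w) (z:ℂ)‖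
        ≤ pnorm (pd (fun w => h w + ε * g w)) :=
    fun z => le_ciSup hAbdd z
  have h1 : pnorm (pd (fun w => h w + ε * g w)) ≤ pnorm (PH h g) + 1 := by
    refine ciSup_le fun z => ?_
    have h10 := abs_le.mp (hpt z)
    have := hB_le z
    linarith [h10.1, h10.2]
  have h2 : pnorm (PH h g) ≤ pnorm (pd (fun w => h w + ε * g w)) + 1 := by
    refine ciSup_le fun z => ?_
    have h10 := abs_le.mp (hpt z)
    have := hA_le z
    linarith [h10.1, h10.2]
  rw [abs_sub_le_iff]
  constructor <;> linarith
end

section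
/- For the harmonic Koebe function K = h + conj(g), where h(z) = (z - z²/2 + z³/6)/(1-z)³ and g(z) = (z²/2 + z³/6)/(1-z)³, the pre-Schwarzian derivative of h satisfies P_h(z) = (5+3z)/(1-z²), and the pre-Schwarzian norm ||P_h|| = sup_{z∈D}(1-|z|²)|P_h(z)| equals 8. -/
open Complex Metric

lemma hK1 {z : ℂ} (hz : z ≠ 1) :
    HasDerivAt (fun w : ℂ => (w - w ^ 2 / 2 + w ^ 3 / 6) / (1 - w) ^ 3)
      ((1 + z) / (1 - z) ^ 4) z := by
  have h1 : (1 : ℂ) - z ≠ 0 := sub_ne_zero.mpr (fun h => hz h.symm)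
  have hN : HasDerivAt (fun w : ℂ => w - w ^ 2 / 2 + w ^ 3 / 6)
      (1 - z + z ^ 2 / 2) z := by
    have := ((hasDerivAt_id z).sub ((hasDerivAt_pow 2 z).div_const 2)).add
      ((hasDerivAt_pow 3 z).div_const 6)
    refine this.congr_deriv ?_
    push_cast; ring
  have hD : HasDerivAt (fun w : ℂ => (1 - w) ^ 3) (3 * (1 - z) ^ 2 * (-1)) z := by
    have := ((hasDerivAt_id z).const_sub 1).pow 3
    refine this.congr_deriv ?_
    simp only [id]; push_cast; ring
  have := hN.div hD (pow_ne_zero 3 h1)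
  refine this.congr_deriv ?_
  field_simp
  ring

lemma hK2 {z : ℂ} (hz : z ≠ 1) :
    HasDerivAt (fun w : ℂ => (1 + w) / (1 - w) ^ 4) ((5 + 3 * z) / (1 - z) ^ 5) z := by
  have h1 : (1 : ℂ) - z ≠ 0 := sub_ne_zero.mpr (fun h => hz h.symm)
  have hN : HasDerivAt (fun w : ℂ => 1 + w) (1 : ℂ) z := by
    simpa using (hasDerivAt_id z).const_add 1
  have hD : HasDerivAt (fun w : ℂ => (1 - w) ^ 4) (4 * (1 - z) ^ 3 * (-1)) z := by
    have := ((hasDerivAt_id z).const_sub 1).pow 4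
    refine this.congr_deriv ?_
    simp only [id]; push_cast; ring
  have := hN.div hD (pow_ne_zero 4 h1)
  refine this.congr_deriv ?_
  field_simp
  ring

lemma pd_eq {z : ℂ} (hz : z ∈ Metric.ball (0 : ℂ) 1) :
    pd (fun w => (w - w ^ 2 / 2 + w ^ 3 / 6) / (1 - w) ^ 3) z = (5 + 3 * z) / (1 - z ^ 2) := by
  simp only [mem_ball, dist_zero_right] at hz
  have hz1 : z ≠ 1 := by rintro rfl; simp at hz
  have hzm1 : z ≠ -1 := by rintro rfl; simp at hz
  have h1 : (1 : ℂ) - z ≠ 0 := sub_ne_zero.mpr (fun h => hz1 h.symm)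
  have h2 : (1 : ℂ) + z ≠ 0 := by
    intro h; apply hzm1; linear_combination h
  have hev : deriv (fun w : ℂ => (w - w ^ 2 / 2 + w ^ 3 / 6) / (1 - w) ^ 3)
      =ᶠ[nhds z] (fun w : ℂ => (1 + w) / (1 - w) ^ 4) := by
    filter_upwards [IsOpen.mem_nhds isOpen_ne (show z ∈ {w : ℂ | w ≠ 1} from hz1)]
      with w hw
    exact (hK1 hw).deriv
  have hd1 : deriv (fun w : ℂ => (w - w ^ 2 / 2 + w ^ 3 / 6) / (1 - w) ^ 3) z
      = (1 + z) / (1 - z) ^ 4 := (hK1 hz1).deriv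
  have hd2 : deriv (deriv (fun w : ℂ => (w - w ^ 2 / 2 + w ^ 3 / 6) / (1 - w) ^ 3)) z
      = (5 + 3 * z) / (1 - z) ^ 5 := by
    rw [hev.deriv_eq]
    exact (hK2 hz1).deriv
  have h3 : (1 : ℂ) - z ^ 2 ≠ 0 := by
    have : (1 : ℂ) - z ^ 2 = (1 - z) * (1 + z) := by ring
    rw [this]; exact mul_ne_zero h1 h2
  rw [pd, hd1, hd2]
  field_simp
  ring

theorem stmt2 :
    (∀ z ∈ Metric.ball (0 : ℂ) 1,
        pd (fun w => (w - w ^ 2 / 2 + w ^ 3 / 6) / (1 - w) ^ 3) z = (5 + 3 * z) / (1 - z ^ 2)) ∧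
    pnorm (pd (fun w => (w - w ^ 2 / 2 + w ^ 3 / 6) / (1 - w) ^ 3)) = 8 := by
  refine ⟨fun z hz => pd_eq hz, ?_⟩
  set h : ℂ → ℂ := fun w => (w - w ^ 2 / 2 + w ^ 3 / 6) / (1 - w) ^ 3 with hh
  have key : ∀ z : Metric.ball (0 : ℂ) 1,
      (1 - ‖(z : ℂ)‖ ^ 2) * ‖pd h (z : ℂ)‖
        = (1 - ‖(z : ℂ)‖ ^ 2) * ‖(5 + 3 * (z : ℂ)) / (1 - (z : ℂ) ^ 2)‖ := by
    intro z; rw [pd_eq z.2]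
  have hub : ∀ z : Metric.ball (0 : ℂ) 1,
      (1 - ‖(z : ℂ)‖ ^ 2) * ‖pd h (z : ℂ)‖ ≤ 8 := by
    intro z
    rw [key z]
    obtain ⟨w, hw⟩ := z
    simp only [mem_ball, dist_zero_right] at hw
    have hw2 : ‖w‖ ^ 2 < 1 := by nlinarith [norm_nonneg w]
    have hden : (1 : ℝ) - ‖w‖ ^ 2 ≤ ‖1 - w ^ 2‖ := by
      calc (1 : ℝ) - ‖w‖ ^ 2 = ‖(1 : ℂ)‖ - ‖w ^ 2‖ := by simp [norm_pow]
        _ ≤ ‖1 - w ^ 2‖ := norm_sub_norm_le _ _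
    have hdenpos : (0 : ℝ) < ‖1 - w ^ 2‖ := lt_of_lt_of_le (by linarith) hden
    have hnum : ‖(5 : ℂ) + 3 * w‖ ≤ 8 := by
      calc ‖(5 : ℂ) + 3 * w‖ ≤ ‖(5 : ℂ)‖ + ‖3 * w‖ := norm_add_le _ _
        _ = 5 + 3 * ‖w‖ := by simp
        _ ≤ 8 := by linarith
    rw [norm_div]
    rw [div_eq_mul_inv, ← mul_assoc]
    calc (1 - ‖w‖ ^ 2) * ‖5 + 3 * w‖ * ‖1 - w ^ 2‖⁻¹
        ≤ ‖1 - w ^ 2‖ * 8 * ‖1 - w ^ 2‖⁻¹ := by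
          apply mul_le_mul_of_nonneg_right _ (by positivity)
          exact mul_le_mul hden hnum (norm_nonneg _) (norm_nonneg _)
      _ = 8 := by
          rw [mul_comm (‖(1:ℂ) - w ^ 2‖) 8, mul_assoc, mul_inv_cancel₀ hdenpos.ne', mul_one]
  have hbdd : BddAbove (Set.range fun z : Metric.ball (0 : ℂ) 1 =>
      (1 - ‖(z : ℂ)‖ ^ 2) * ‖pd h (z : ℂ)‖) := ⟨8, by rintro x ⟨z, rfl⟩; exact hub z⟩
  have hne : Nonempty (Metric.ball (0 : ℂ) 1) := ⟨⟨0, by simp⟩⟩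
  rw [pnorm]
  apply le_antisymm (ciSup_le hub)
  rw [iSup, le_csSup_iff hbdd (Set.range_nonempty _)]
  intro b hb
  have hb : ∀ z : Metric.ball (0 : ℂ) 1, (1 - ‖(z : ℂ)‖ ^ 2) * ‖pd h (z : ℂ)‖ ≤ b :=
    fun z => hb ⟨z, rfl⟩
  by_contra hb8
  push_neg at hb8
  -- choose r ∈ [0,1) with 5 + 3r > b
  set r : ℝ := max 0 (((b - 5) / 3 + 1) / 2) with hr
  have hr0 : 0 ≤ r := le_max_left _ _
  have hlt : (b - 5) / 3 < 1 := by linarith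
  have hr1 : r < 1 := by
    apply max_lt (by norm_num)
    linarith
  have hrb : b < 5 + 3 * r := by
    have h2 : ((b - 5) / 3 + 1) / 2 ≤ r := le_max_right _ _
    linarith
  have hzmem : ((r : ℂ)) ∈ Metric.ball (0 : ℂ) 1 := by
    simp only [mem_ball, dist_zero_right, Complex.norm_real, Real.norm_eq_abs]
    rwa [_root_.abs_of_nonneg hr0]
  have hval := hb ⟨(r : ℂ), hzmem⟩
  rw [key ⟨(r : ℂ), hzmem⟩] at hval
  simp only at hval
  have hr2 : (0:ℝ) < 1 - r ^ 2 := by nlinarith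
  have hcast : ((5:ℂ) + 3 * (r:ℂ)) / (1 - (r:ℂ) ^ 2) = (((5 + 3 * r) / (1 - r ^ 2) : ℝ) : ℂ) := by
    all_goals (push_cast; try ring)
  rw [hcast, Complex.norm_real, Real.norm_eq_abs, _root_.abs_of_nonneg (by positivity),
    Complex.norm_real, Real.norm_eq_abs, _root_.abs_of_nonneg (by positivity)] at hval
  have : (1 - r ^ 2) * ((5 + 3 * r) / (1 - r ^ 2)) = 5 + 3 * r := by
    field_simp
  rw [this] at hval
  linarith
end

section
/- Let f = h + conj(g) be a sense-preserving harmonic mapping in D with ||P_h|| < ∞. Then for any ε₁, ε₂ in the closed unit disk, | ||P_{h+ε₁g}|| - ||P_{h+ε₂g}|| | ≤ 2. -/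
open Complex Metric

/-! ### Auxiliary lemmas -/

lemma sqdiff (a w : ℂ) :
    ‖1 - (starRingEnd ℂ) a * w‖ ^ 2 - ‖w - a‖ ^ 2 = (1 - ‖a‖ ^ 2) * (1 - ‖w‖ ^ 2) := by
  simp only [Complex.sq_norm, Complex.normSq_apply, Complex.sub_re,
    Complex.sub_im, Complex.mul_re, Complex.mul_im, Complex.one_re, Complex.one_im,
    Complex.conj_re, Complex.conj_im]
  ring

lemma sqdiff' (ε w : ℂ) :
    ‖1 + ε * w‖ ^ 2 - ‖ε + (starRingEnd ℂ) w‖ ^ 2 = (1 - ‖ε‖ ^ 2) * (1 - ‖w‖ ^ 2) := by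
  simp only [Complex.sq_norm, Complex.normSq_apply, Complex.add_re,
    Complex.add_im, Complex.mul_re, Complex.mul_im, Complex.one_re, Complex.one_im,
    Complex.conj_re, Complex.conj_im]
  ring

lemma norm_add_conj_le {ε w : ℂ} (hε : ‖ε‖ ≤ 1) (hw : ‖w‖ ≤ 1) :
    ‖ε + (starRingEnd ℂ) w‖ ≤ ‖1 + ε * w‖ := by
  have h := sqdiff' ε w
  refine (pow_le_pow_iff_left₀ (norm_nonneg _) (norm_nonneg _) two_ne_zero).mp ?_
  have h1 : (0:ℝ) ≤ 1 - ‖ε‖ ^ 2 := by nlinarith [norm_nonneg ε]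
  have h2 : (0:ℝ) ≤ 1 - ‖w‖ ^ 2 := by nlinarith [norm_nonneg w]
  nlinarith [mul_nonneg h1 h2]

noncomputable def mob (a w : ℂ) : ℂ := (w - a) / (1 - (starRingEnd ℂ) a * w)

lemma mob_denom_ne {a w : ℂ} (ha : ‖a‖ < 1) (hw : ‖w‖ ≤ 1) :
    1 - (starRingEnd ℂ) a * w ≠ 0 := by
  intro e
  have h1 : (starRingEnd ℂ) a * w = 1 := by linear_combination -e
  have h2 : ‖(starRingEnd ℂ) a * w‖ < 1 := by
    rw [norm_mul, RCLike.norm_conj]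
    nlinarith [norm_nonneg a]
  rw [h1, norm_one] at h2
  exact lt_irrefl _ h2

lemma mob_maps {a w : ℂ} (ha : ‖a‖ < 1) (hw : ‖w‖ < 1) : ‖mob a w‖ < 1 := by
  rw [mob, norm_div, div_lt_one (norm_pos_iff.mpr (mob_denom_ne ha hw.le))]
  have h := sqdiff a w
  refine (pow_lt_pow_iff_left₀ (norm_nonneg _) (norm_nonneg _) two_ne_zero).mp ?_
  have h1 : (0:ℝ) < 1 - ‖a‖ ^ 2 := by nlinarith [norm_nonneg a]
  have h2 : (0:ℝ) < 1 - ‖w‖ ^ 2 := by nlinarith [norm_nonneg w]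
  nlinarith [mul_pos h1 h2]

lemma mob_hasDerivAt {a w : ℂ} (hne : 1 - (starRingEnd ℂ) a * w ≠ 0) :
    HasDerivAt (mob a) ((1 - (starRingEnd ℂ) a * a) / (1 - (starRingEnd ℂ) a * w) ^ 2) w := by
  have h1 : HasDerivAt (fun x : ℂ => x - a) 1 w := (hasDerivAt_id w).sub_const a
  have h2 : HasDerivAt (fun x : ℂ => 1 - (starRingEnd ℂ) a * x) (-((starRingEnd ℂ) a)) w := by
    simpa using (((hasDerivAt_id w).const_mul ((starRingEnd ℂ) a)).const_sub 1)
  have h3 := h1.div h2 hne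
  refine h3.congr_deriv ?_
  ring

lemma one_sub_conj_mul (a : ℂ) : 1 - (starRingEnd ℂ) a * a = ((1 - ‖a‖ ^ 2 : ℝ) : ℂ) := by
  rw [mul_comm, Complex.mul_conj]
  push_cast [Complex.normSq_eq_norm_sq]
  ring

lemma schwarzPick {ω : ℂ → ℂ} (hd : DifferentiableOn ℂ ω (ball 0 1))
    (hm : ∀ z ∈ ball (0 : ℂ) 1, ‖ω z‖ < 1) {z₀ : ℂ} (hz : z₀ ∈ ball (0 : ℂ) 1) :
    (1 - ‖z₀‖ ^ 2) * ‖deriv ω z₀‖ ≤ 1 - ‖ω z₀‖ ^ 2 := by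
  set a := ω z₀ with ha_def
  have ha : ‖a‖ < 1 := hm z₀ hz
  have hz' : ‖z₀‖ < 1 := mem_ball_zero_iff.mp hz
  have hz'' : ‖(-z₀ : ℂ)‖ < 1 := by rwa [norm_neg]
  set F : ℂ → ℂ := fun w => mob a (ω (mob (-z₀) w)) with hF_def
  have hφ0 : mob (-z₀) 0 = z₀ := by simp [mob]
  have hF0 : F 0 = 0 := by
    show mob a (ω (mob (-z₀) 0)) = 0
    rw [hφ0, ← ha_def, mob, sub_self, zero_div]
  have hder : ∀ w ∈ ball (0 : ℂ) 1, HasDerivAt F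
      ((1 - (starRingEnd ℂ) a * a) / (1 - (starRingEnd ℂ) a * (ω (mob (-z₀) w))) ^ 2 *
        (deriv ω (mob (-z₀) w) *
          ((1 - (starRingEnd ℂ) (-z₀) * (-z₀)) / (1 - (starRingEnd ℂ) (-z₀) * w) ^ 2))) w := by
    intro w hw
    have hw' : ‖w‖ < 1 := mem_ball_zero_iff.mp hw
    have d1 := mob_hasDerivAt (a := -z₀) (mob_denom_ne hz'' hw'.le)
    have hφw : ‖mob (-z₀) w‖ < 1 := mob_maps hz'' hw'
    have hφw' : mob (-z₀) w ∈ ball (0 : ℂ) 1 := mem_ball_zero_iff.mpr hφw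
    have d2 : HasDerivAt ω (deriv ω (mob (-z₀) w)) (mob (-z₀) w) :=
      (hd.differentiableAt (isOpen_ball.mem_nhds hφw')).hasDerivAt
    have hωφ : ‖ω (mob (-z₀) w)‖ < 1 := hm _ hφw'
    have d3 := mob_hasDerivAt (a := a) (mob_denom_ne ha hωφ.le)
    exact d3.comp w (d2.comp w d1)
  have hFdiff : DifferentiableOn ℂ F (ball 0 1) := fun w hw =>
    ((hder w hw).differentiableAt).differentiableWithinAt
  have hmaps : Set.MapsTo F (ball 0 1) (ball (F 0) 1) := by
    rw [hF0]
    intro w hw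
    exact mem_ball_zero_iff.mpr
      (mob_maps ha (hm _ (mem_ball_zero_iff.mpr (mob_maps hz'' (mem_ball_zero_iff.mp hw)))))
  have hbound : ‖deriv F 0‖ ≤ 1 := by
    have := norm_deriv_le_div_of_mapsTo_ball hFdiff (hmaps.mono_right ball_subset_closedBall) one_pos
    simpa using this
  have hD := (hder 0 (mem_ball_self one_pos)).deriv
  rw [hφ0, ← ha_def] at hD
  have hcz : (1 : ℂ) - (starRingEnd ℂ) (-z₀) * (-z₀) = ((1 - ‖z₀‖ ^ 2 : ℝ) : ℂ) := by
    rw [map_neg, neg_mul_neg, ← one_sub_conj_mul]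
  have hs : (0 : ℝ) < 1 - ‖a‖ ^ 2 := by nlinarith [norm_nonneg a]
  have ht : (0 : ℝ) ≤ 1 - ‖z₀‖ ^ 2 := by nlinarith [norm_nonneg z₀]
  have hD2 : deriv F 0 = ((1 - ‖a‖ ^ 2 : ℝ) : ℂ) / ((1 - ‖a‖ ^ 2 : ℝ) : ℂ) ^ 2 *
      (deriv ω z₀ * ((1 - ‖z₀‖ ^ 2 : ℝ) : ℂ)) := by
    rw [hD]
    simp only [mul_zero, sub_zero, one_pow, div_one, one_sub_conj_mul, hcz]
  have hnorm : ‖deriv F 0‖ = (1 - ‖a‖ ^ 2) / (1 - ‖a‖ ^ 2) ^ 2 *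
      (‖deriv ω z₀‖ * (1 - ‖z₀‖ ^ 2)) := by
    rw [hD2, norm_mul, norm_mul, norm_div, norm_pow, Complex.norm_real, Complex.norm_real,
      Real.norm_of_nonneg hs.le, Real.norm_of_nonneg ht]
  have hdd0 : ∀ x : ℝ, 0 < x → x / x ^ 2 = x⁻¹ := fun x hx => by
    rw [pow_two, ← div_div, div_self hx.ne', one_div]
  have hdd := hdd0 _ hs
  rw [hnorm, hdd, inv_mul_le_iff₀ hs, mul_one] at hbound
  linarith

lemma deriv_combo {h g : ℂ → ℂ} (hh : DifferentiableOn ℂ h (ball 0 1))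
    (hg : DifferentiableOn ℂ g (ball 0 1)) (ε : ℂ) {z : ℂ} (hz : z ∈ ball (0 : ℂ) 1) :
    deriv (fun w => h w + ε * g w) z = deriv h z + ε * deriv g z := by
  have h1 : DifferentiableAt ℂ h z := hh.differentiableAt (isOpen_ball.mem_nhds hz)
  have h2 : DifferentiableAt ℂ g z := hg.differentiableAt (isOpen_ball.mem_nhds hz)
  rw [deriv_fun_add h1 (h2.const_mul ε), deriv_const_mul ε h2]

lemma deriv2_combo {h g : ℂ → ℂ} (hh : DifferentiableOn ℂ h (ball 0 1))
    (hg : DifferentiableOn ℂ g (ball 0 1)) (ε : ℂ) {z : ℂ} (hz : z ∈ ball (0 : ℂ) 1) :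
    deriv (deriv (fun w => h w + ε * g w)) z = deriv (deriv h) z + ε * deriv (deriv g) z := by
  have hev : deriv (fun w => h w + ε * g w) =ᶠ[nhds z] fun w => deriv h w + ε * deriv g w :=
    Filter.eventually_of_mem (isOpen_ball.mem_nhds hz) fun w hw => deriv_combo hh hg ε hw
  rw [hev.deriv_eq]
  have h1 : DifferentiableAt ℂ (deriv h) z :=
    (((hh.analyticOnNhd isOpen_ball).deriv) z hz).differentiableAt
  have h2 : DifferentiableAt ℂ (deriv g) z :=
    (((hg.analyticOnNhd isOpen_ball).deriv) z hz).differentiableAt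
  rw [deriv_fun_add h1 (h2.const_mul ε), deriv_const_mul ε h2]

theorem stmt4 (h g : ℂ → ℂ) (hf : SPH h g) (hfin : pbdd (pd h))
    (ε₁ ε₂ : ℂ) (hε₁ : ‖ε₁‖ ≤ 1) (hε₂ : ‖ε₂‖ ≤ 1) :
    |pnorm (pd (fun w => h w + ε₁ * g w)) - pnorm (pd (fun w => h w + ε₂ * g w))| ≤ 2 := by
  obtain ⟨hh, hg, -, hlt⟩ := hf
  haveI : Nonempty ↥(ball (0 : ℂ) 1) := ⟨⟨0, mem_ball_self one_pos⟩⟩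
  set ω : ℂ → ℂ := fun z => deriv g z / deriv h z with hω_def
  have hH1 : ∀ z ∈ ball (0 : ℂ) 1, DifferentiableAt ℂ (deriv h) z := fun z hz =>
    (((hh.analyticOnNhd isOpen_ball).deriv) z hz).differentiableAt
  have hG1 : ∀ z ∈ ball (0 : ℂ) 1, DifferentiableAt ℂ (deriv g) z := fun z hz =>
    (((hg.analyticOnNhd isOpen_ball).deriv) z hz).differentiableAt
  have hne : ∀ z ∈ ball (0 : ℂ) 1, deriv h z ≠ 0 := by
    intro z hz e
    have := hlt z hz
    rw [e, norm_zero] at this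
    exact (norm_nonneg _).not_gt this
  have hωd : DifferentiableOn ℂ ω (ball 0 1) := fun z hz =>
    ((hG1 z hz).div (hH1 z hz) (hne z hz)).differentiableWithinAt
  have hωlt : ∀ z ∈ ball (0 : ℂ) 1, ‖ω z‖ < 1 := by
    intro z hz
    rw [hω_def]
    simp only [norm_div]
    rw [div_lt_one (norm_pos_iff.mpr (hne z hz))]
    exact hlt z hz
  -- master identity
  have master : ∀ ε : ℂ, ‖ε‖ ≤ 1 → ∀ z ∈ ball (0 : ℂ) 1,
      pd (fun w => h w + ε * g w) z = pd h z + ε * deriv ω z / (1 + ε * ω z) ∧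
      (1 + ε * ω z) ≠ 0 := by
    intro ε hε z hz
    have hH := hH1 z hz
    have hG := hG1 z hz
    have hHne := hne z hz
    have hd1 := deriv_combo hh hg ε hz
    have hd2 := deriv2_combo hh hg ε hz
    have hdene : deriv h z + ε * deriv g z ≠ 0 := by
      intro e
      have h1 : deriv h z = -(ε * deriv g z) := by linear_combination e
      have h2 : ‖deriv h z‖ = ‖ε‖ * ‖deriv g z‖ := by rw [h1, norm_neg, norm_mul]
      nlinarith [hlt z hz, norm_nonneg (deriv g z)]
    have hωz : ω z = deriv g z / deriv h z := rfl
    have hdω : deriv ω z =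
        (deriv (deriv g) z * deriv h z - deriv g z * deriv (deriv h) z) / deriv h z ^ 2 :=
      deriv_div hG hH hHne
    have h1e : 1 + ε * ω z = (deriv h z + ε * deriv g z) / deriv h z := by
      rw [hωz]
      field_simp
    refine ⟨?_, by rw [h1e]; exact div_ne_zero hdene hHne⟩
    simp only [pd]
    rw [hd1, hd2, hdω, h1e]
    field_simp
    ring
  -- key pointwise difference bound
  have key : ∀ εa εb : ℂ, ‖εa‖ ≤ 1 → ‖εb‖ ≤ 1 → ∀ z ∈ ball (0 : ℂ) 1,
      (1 - ‖z‖ ^ 2) * ‖pd (fun w => h w + εa * g w) z - pd (fun w => h w + εb * g w) z‖ ≤ 2 := by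
    intro εa εb hεa hεb z hz
    obtain ⟨i1, n1⟩ := master εa hεa z hz
    obtain ⟨i2, n2⟩ := master εb hεb z hz
    have ha : ‖ω z‖ < 1 := hωlt z hz
    have hca := one_sub_conj_mul (ω z)
    have hs : (0 : ℝ) < 1 - ‖ω z‖ ^ 2 := by nlinarith [norm_nonneg (ω z)]
    have hcane : (1 : ℂ) - (starRingEnd ℂ) (ω z) * ω z ≠ 0 := by
      rw [hca]
      exact Complex.ofReal_ne_zero.mpr hs.ne'
    have e : pd (fun w => h w + εa * g w) z - pd (fun w => h w + εb * g w) z =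
        deriv ω z * ((εa + (starRingEnd ℂ) (ω z)) / (1 + εa * ω z) -
          (εb + (starRingEnd ℂ) (ω z)) / (1 + εb * ω z)) /
          (1 - (starRingEnd ℂ) (ω z) * ω z) := by
      rw [i1, i2]
      rw [eq_div_iff hcane, div_sub_div _ _ n1 n2, add_sub_add_left_eq_sub, div_sub_div _ _ n1 n2,
        div_mul_eq_mul_div, mul_div_assoc']
      congr 1
      ring
    have hA1 : ‖(εa + (starRingEnd ℂ) (ω z)) / (1 + εa * ω z)‖ ≤ 1 := by
      rw [norm_div]
      exact (div_le_one (norm_pos_iff.mpr n1)).mpr (norm_add_conj_le hεa ha.le)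
    have hA2 : ‖(εb + (starRingEnd ℂ) (ω z)) / (1 + εb * ω z)‖ ≤ 1 := by
      rw [norm_div]
      exact (div_le_one (norm_pos_iff.mpr n2)).mpr (norm_add_conj_le hεb ha.le)
    have hsp := schwarzPick hωd hωlt hz
    have ht : (0 : ℝ) ≤ 1 - ‖z‖ ^ 2 := by
      have := mem_ball_zero_iff.mp hz
      nlinarith [norm_nonneg z]
    have hAA : ‖(εa + (starRingEnd ℂ) (ω z)) / (1 + εa * ω z) -
        (εb + (starRingEnd ℂ) (ω z)) / (1 + εb * ω z)‖ ≤ 2 :=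
      (norm_sub_le _ _).trans (by linarith)
    rw [e, norm_div, norm_mul, hca, Complex.norm_real, Real.norm_of_nonneg hs.le]
    set N := ‖(εa + (starRingEnd ℂ) (ω z)) / (1 + εa * ω z) -
      (εb + (starRingEnd ℂ) (ω z)) / (1 + εb * ω z)‖ with hN
    have hN0 : 0 ≤ N := norm_nonneg _
    have e2 : (1 - ‖z‖ ^ 2) * (‖deriv ω z‖ * N / (1 - ‖ω z‖ ^ 2)) =
        (1 - ‖z‖ ^ 2) * ‖deriv ω z‖ * N / (1 - ‖ω z‖ ^ 2) := by ring
    rw [e2, div_le_iff₀ hs]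
    nlinarith [mul_nonneg ht (norm_nonneg (deriv ω z)),
      mul_nonneg (by linarith : (0:ℝ) ≤ 2 - N) (mul_nonneg ht (norm_nonneg (deriv ω z)))]
  -- bound for a single pd, giving bddAbove
  have pdbound : ∀ ε : ℂ, ‖ε‖ ≤ 1 → ∀ z ∈ ball (0 : ℂ) 1,
      (1 - ‖z‖ ^ 2) * ‖pd (fun w => h w + ε * g w) z‖ ≤ (1 - ‖z‖ ^ 2) * ‖pd h z‖ + 2 := by
    intro ε hε z hz
    obtain ⟨i, n⟩ := master ε hε z hz
    have ha : ‖ω z‖ < 1 := hωlt z hz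
    have ht : (0 : ℝ) ≤ 1 - ‖z‖ ^ 2 := by
      have := mem_ball_zero_iff.mp hz
      nlinarith [norm_nonneg z]
    have hsp := schwarzPick hωd hωlt hz
    have hd : 1 - ‖ω z‖ ≤ ‖1 + ε * ω z‖ := by
      have h1 := norm_add_le (1 + ε * ω z) (-(ε * ω z))
      simp only [add_neg_cancel_right, norm_one, norm_neg] at h1
      have h2 : ‖ε * ω z‖ ≤ ‖ω z‖ := by
        rw [norm_mul]
        nlinarith [norm_nonneg (ω z)]
      linarith
    have hdpos : 0 < ‖1 + ε * ω z‖ := lt_of_lt_of_le (by linarith) hd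
    have hcor : (1 - ‖z‖ ^ 2) * ‖ε * deriv ω z / (1 + ε * ω z)‖ ≤ 2 := by
      rw [norm_div, norm_mul]
      have e1 : (1 - ‖z‖ ^ 2) * (‖ε‖ * ‖deriv ω z‖ / ‖1 + ε * ω z‖) =
          (1 - ‖z‖ ^ 2) * (‖ε‖ * ‖deriv ω z‖) / ‖1 + ε * ω z‖ := by ring
      rw [e1, div_le_iff₀ hdpos]
      nlinarith [norm_nonneg (deriv ω z), norm_nonneg (ω z), norm_nonneg ε,
        mul_nonneg ht (norm_nonneg (deriv ω z))]
    rw [i]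
    calc (1 - ‖z‖ ^ 2) * ‖pd h z + ε * deriv ω z / (1 + ε * ω z)‖
        ≤ (1 - ‖z‖ ^ 2) * (‖pd h z‖ + ‖ε * deriv ω z / (1 + ε * ω z)‖) :=
          mul_le_mul_of_nonneg_left (norm_add_le _ _) ht
      _ ≤ (1 - ‖z‖ ^ 2) * ‖pd h z‖ + 2 := by rw [mul_add]; linarith
  -- boundedness of ranges
  obtain ⟨M, hM⟩ := hfin
  have hb : ∀ ε : ℂ, ‖ε‖ ≤ 1 → BddAbove (Set.range fun z : ↥(ball (0 : ℂ) 1) =>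
      (1 - ‖(z : ℂ)‖ ^ 2) * ‖pd (fun w => h w + ε * g w) (z : ℂ)‖) := by
    intro ε hε
    refine ⟨M + 2, ?_⟩
    rintro x ⟨z, rfl⟩
    have h1 := pdbound ε hε (z : ℂ) z.2
    have h2 : (1 - ‖(z : ℂ)‖ ^ 2) * ‖pd h (z : ℂ)‖ ≤ M := hM (Set.mem_range_self z)
    simp only
    linarith
  -- sup comparison
  have comp : ∀ εa εb : ℂ, ‖εa‖ ≤ 1 → ‖εb‖ ≤ 1 →
      pnorm (pd (fun w => h w + εa * g w)) ≤ pnorm (pd (fun w => h w + εb * g w)) + 2 := by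
    intro εa εb hεa hεb
    rw [pnorm, pnorm]
    apply ciSup_le
    intro z
    have hkey := key εa εb hεa hεb (z : ℂ) z.2
    have ht : (0 : ℝ) ≤ 1 - ‖(z : ℂ)‖ ^ 2 := by
      have := mem_ball_zero_iff.mp z.2
      nlinarith [norm_nonneg (z : ℂ)]
    have hstep : (1 - ‖(z : ℂ)‖ ^ 2) * ‖pd (fun w => h w + εa * g w) (z : ℂ)‖ ≤
        (1 - ‖(z : ℂ)‖ ^ 2) * ‖pd (fun w => h w + εb * g w) (z : ℂ)‖ + 2 := by
      have h3 : ‖pd (fun w => h w + εa * g w) (z : ℂ)‖ ≤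
          ‖pd (fun w => h w + εb * g w) (z : ℂ)‖ +
          ‖pd (fun w => h w + εa * g w) (z : ℂ) - pd (fun w => h w + εb * g w) (z : ℂ)‖ := by
        have := norm_sub_norm_le (pd (fun w => h w + εa * g w) (z : ℂ))
          (pd (fun w => h w + εb * g w) (z : ℂ))
        linarith
      nlinarith [mul_le_mul_of_nonneg_left h3 ht]
    exact hstep.trans (add_le_add_left (le_ciSup (hb εb hεb) z) 2)
  have c1 := comp ε₁ ε₂ hε₁ hε₂
  have c2 := comp ε₂ ε₁ hε₂ hε₁
  rw [abs_le]
  constructor <;> linarith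
end

section
/- Let H_{a,b}(z) = ∫₀^z (1+t)^a/(1-t)^b dt for real a, b. Then the pre-Schwarzian norm of H_{a,b} equals 2·max{|a|, |b|}, i.e. sup_{z∈D}(1-|z|²)·|(a+b+(b-a)z)/(1-z²)| = |a+b| + |b-a|. -/
open Complex Metric

lemma abs_add_of_mul_nonneg (u v : ℝ) (h : 0 ≤ u * v) : |u + v| = |u| + |v| := by
  rcases le_total 0 u with hu|hu <;> rcases le_total 0 v with hv|hv
  · rw [_root_.abs_of_nonneg hu, _root_.abs_of_nonneg hv, _root_.abs_of_nonneg (by linarith)]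
  · have : u = 0 ∨ v = 0 := by
      rcases lt_or_eq_of_le hu with h1|h1
      · right; nlinarith
      · left; exact h1.symm
    rcases this with h1|h1 <;> simp [h1]
  · have : u = 0 ∨ v = 0 := by
      rcases lt_or_eq_of_le hv with h1|h1
      · left; nlinarith
      · right; exact h1.symm
    rcases this with h1|h1 <;> simp [h1]
  · rw [abs_of_nonpos hu, abs_of_nonpos hv, abs_of_nonpos (by linarith)]; ring

theorem stmt6 (a b : ℝ) :
    (⨆ z : Metric.ball (0 : ℂ) 1,
        (1 - ‖(z : ℂ)‖ ^ 2) *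
          ‖(((a : ℂ) + (b : ℂ) + ((b : ℂ) - (a : ℂ)) * (z : ℂ)) / (1 - (z : ℂ) ^ 2))‖) =
      2 * max |a| |b| ∧ 2 * max |a| |b| = |a + b| + |b - a| := by
  have hmax : 2 * max |a| |b| = |a + b| + |b - a| := by
    rcases abs_cases a with ⟨h1,h2⟩|⟨h1,h2⟩ <;>
    rcases abs_cases b with ⟨h3,h4⟩|⟨h3,h4⟩ <;>
    rcases abs_cases (a+b) with ⟨h5,h6⟩|⟨h5,h6⟩ <;>
    rcases abs_cases (b-a) with ⟨h7,h8⟩|⟨h7,h8⟩ <;>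
    rcases max_cases |a| |b| with ⟨h9,h10⟩|⟨h9,h10⟩ <;> linarith
  refine ⟨hmax ▸ ?_, hmax⟩
  set M := |a + b| + |b - a| with hM
  haveI : Nonempty ↥(Metric.ball (0:ℂ) 1) := ⟨⟨0, by simp⟩⟩
  set f : ↥(Metric.ball (0:ℂ) 1) → ℝ := fun z =>
    (1 - ‖(z : ℂ)‖ ^ 2) *
      ‖(((a : ℂ) + (b : ℂ) + ((b : ℂ) - (a : ℂ)) * (z : ℂ)) / (1 - (z : ℂ) ^ 2))‖ with hf
  have hub : ∀ z, f z ≤ M := by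
    intro z
    have hz : ‖(z:ℂ)‖ < 1 := mem_ball_zero_iff.mp z.2
    have hz0 : (0:ℝ) ≤ ‖(z:ℂ)‖ := norm_nonneg _
    have hden : (1 : ℝ) - ‖(z:ℂ)‖^2 ≤ ‖(1 - (z:ℂ)^2)‖ := by
      calc (1:ℝ) - ‖(z:ℂ)‖^2 = ‖(1:ℂ)‖ - ‖(z:ℂ)^2‖ := by simp [norm_pow]
        _ ≤ ‖(1 - (z:ℂ)^2)‖ := norm_sub_norm_le _ _
    have hpos : (0:ℝ) < ‖(1 - (z:ℂ)^2)‖ := lt_of_lt_of_le (by nlinarith) hden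
    have hnum : ‖((a : ℂ) + (b : ℂ) + ((b : ℂ) - (a : ℂ)) * (z : ℂ))‖ ≤ M := by
      calc ‖((a : ℂ) + (b : ℂ) + ((b : ℂ) - (a : ℂ)) * (z : ℂ))‖
          ≤ ‖((a:ℂ)+(b:ℂ))‖ + ‖((b:ℂ)-(a:ℂ))*(z:ℂ)‖ := norm_add_le _ _
        _ = |a+b| + |b-a| * ‖(z:ℂ)‖ := by
            rw [norm_mul, ← Complex.ofReal_add, ← Complex.ofReal_sub,
              Complex.norm_real, Complex.norm_real, Real.norm_eq_abs, Real.norm_eq_abs]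
        _ ≤ |a+b| + |b-a| * 1 := by
            have := abs_nonneg (b-a)
            nlinarith
        _ = M := by rw [hM]; ring
    have h1 : f z = (1 - ‖(z:ℂ)‖^2) *
        (‖((a : ℂ) + (b : ℂ) + ((b : ℂ) - (a : ℂ)) * (z : ℂ))‖ / ‖(1 - (z:ℂ)^2)‖) := by
      rw [hf]; simp [norm_div]
    rw [h1]
    calc (1 - ‖(z:ℂ)‖^2) *
        (‖((a : ℂ) + (b : ℂ) + ((b : ℂ) - (a : ℂ)) * (z : ℂ))‖ / ‖(1 - (z:ℂ)^2)‖)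
        ≤ ‖(1 - (z:ℂ)^2)‖ *
          (‖((a : ℂ) + (b : ℂ) + ((b : ℂ) - (a : ℂ)) * (z : ℂ))‖ / ‖(1 - (z:ℂ)^2)‖) :=
          mul_le_mul_of_nonneg_right hden (div_nonneg (norm_nonneg _) (norm_nonneg _))
      _ = ‖((a : ℂ) + (b : ℂ) + ((b : ℂ) - (a : ℂ)) * (z : ℂ))‖ := by
          rw [mul_comm, div_mul_cancel₀ _ hpos.ne']
      _ ≤ M := hnum
  have hbdd : BddAbove (Set.range f) := ⟨M, by rintro y ⟨z, rfl⟩; exact hub z⟩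
  refine le_antisymm (ciSup_le hub) ?_
  refine le_of_forall_pos_le_add ?_
  intro ε hε
  set d := |b - a| with hd
  set t := max 0 (1 - ε/(d+1)) with ht
  have hd0 : 0 ≤ d := abs_nonneg _
  have ht0 : 0 ≤ t := le_max_left _ _
  have ht1 : t < 1 := by
    rw [ht]
    apply max_lt one_pos
    have : 0 < ε/(d+1) := div_pos hε (by linarith)
    linarith
  have ht2 : 1 - ε/(d+1) ≤ t := le_max_right _ _
  set sgn : ℝ := if 0 ≤ (a+b)*(b-a) then 1 else -1 with hsgn
  have hsgn2 : sgn^2 = 1 := by rw [hsgn]; split <;> norm_num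
  have hsabs : |sgn| = 1 := by rw [hsgn]; split <;> norm_num
  set x : ℝ := sgn * t with hx
  have hxabs : |x| = t := by rw [hx, abs_mul, hsabs, _root_.abs_of_nonneg ht0, one_mul]
  have hmem : ((x:ℝ):ℂ) ∈ Metric.ball (0:ℂ) 1 := by
    rw [mem_ball_zero_iff, Complex.norm_real, Real.norm_eq_abs, hxabs]
    exact ht1
  have hsign : 0 ≤ (a+b) * ((b-a)*x) := by
    rw [hx, hsgn]
    split
    · next h => nlinarith
    · next h =>
      have : (a+b)*(b-a) ≤ 0 := by linarith [lt_of_not_ge h]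
      nlinarith
  have hval : f ⟨((x:ℝ):ℂ), hmem⟩ = |a+b| + d * t := by
    have hnum : ((a : ℂ) + (b : ℂ) + ((b : ℂ) - (a : ℂ)) * ((x:ℝ):ℂ))
        = (((a+b) + (b-a)*x : ℝ) : ℂ) := by push_cast; ring
    have hden : (1 : ℂ) - ((x:ℝ):ℂ)^2 = (((1 - x^2) : ℝ) : ℂ) := by push_cast; ring
    have hx2 : x^2 = t^2 := by rw [hx]; rw [mul_pow, hsgn2, one_mul]
    have hden0 : (0:ℝ) < 1 - x^2 := by rw [hx2]; nlinarith
    rw [hf]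
    simp only
    rw [hnum, hden, norm_div, Complex.norm_real, Complex.norm_real, Complex.norm_real,
      Real.norm_eq_abs, Real.norm_eq_abs, Real.norm_eq_abs, hxabs,
      abs_of_pos hden0, hx2]
    rw [abs_add_of_mul_nonneg _ _ hsign, abs_mul, hxabs]
    have h2 : (1 - t^2) ≠ 0 := by nlinarith
    rw [mul_comm ((1:ℝ)-t^2), div_mul_cancel₀ _ h2, hd]
  have hle : f ⟨((x:ℝ):ℂ), hmem⟩ ≤ ⨆ z, f z := le_ciSup hbdd _
  have : M ≤ |a+b| + d*t + ε := by
    rw [hM]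
    have h3 : (1 - t) * d ≤ ε/(d+1) * d := by
      apply mul_le_mul_of_nonneg_right _ hd0
      linarith
    have h4 : ε/(d+1) * d ≤ ε := by
      rw [div_mul_eq_mul_div, div_le_iff₀ (by linarith : (0:ℝ) < d+1)]
      nlinarith
    nlinarith
  calc M ≤ |a+b| + d*t + ε := this
    _ = f ⟨((x:ℝ):ℂ), hmem⟩ + ε := by rw [hval]
    _ ≤ (⨆ z, f z) + ε := by linarith
end

section
/- If a, b are real numbers with min{|a|,|b|} + |a-b| ≤ 1, then the function H_{a,b}(z) = ∫₀^z (1+t)^a/(1-t)^b dt satisfies Re(H_{a,b}'(z)·e^{iθ}) > 0 in D for a suitable rotation, i.e. |arg H_{a,b}'(z)| < π/2 for all z ∈ D, and hence H_{a,b} is univalent (injective) in the unit disk. -/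
open Complex Metric

section aux

private lemma auxbound {a b α β : ℝ} (h1 : |a| + |a - b| ≤ 1)
    (hβ : |β| < Real.pi / 2) (hαβ : |α - β| < Real.pi / 2) :
    |α * a - β * b| < Real.pi / 2 := by
  rcases eq_or_ne a 0 with rfl | ha
  · rcases eq_or_ne b 0 with rfl | hb
    · simpa using by linarith [Real.pi_pos]
    · have hb1 : |b| ≤ 1 := by
        have : |(0:ℝ) - b| = |b| := by rw [zero_sub, abs_neg]
        simpa [this] using h1
      have : |α * 0 - β * b| = |β| * |b| := by rw [show α * 0 - β * b = -(β*b) by ring, abs_neg, abs_mul]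
      rw [this]
      calc |β| * |b| < (Real.pi / 2) * |b| := by
            exact mul_lt_mul_of_pos_right hβ (abs_pos.2 hb)
        _ ≤ (Real.pi / 2) * 1 := by
            exact mul_le_mul_of_nonneg_left hb1 (by linarith [Real.pi_pos])
        _ = Real.pi / 2 := mul_one _
  · have e : α * a - β * b = a * (α - β) + (a - b) * β := by ring
    calc |α * a - β * b| ≤ |a * (α - β)| + |(a - b) * β| := by rw [e]; exact abs_add_le _ _
      _ = |a| * |α - β| + |a - b| * |β| := by rw [abs_mul, abs_mul]
      _ < |a| * (Real.pi / 2) + |a - b| * (Real.pi / 2) := by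
          have h2 : |a| * |α - β| < |a| * (Real.pi / 2) :=
            mul_lt_mul_of_pos_left hαβ (abs_pos.2 ha)
          have h3 : |a - b| * |β| ≤ |a - b| * (Real.pi / 2) :=
            mul_le_mul_of_nonneg_left hβ.le (abs_nonneg _)
          linarith
      _ = (|a| + |a - b|) * (Real.pi / 2) := by ring
      _ ≤ 1 * (Real.pi / 2) := mul_le_mul_of_nonneg_right h1 (by linarith [Real.pi_pos])
      _ = Real.pi / 2 := one_mul _

private lemma repos (a b : ℝ) (hab : min |a| |b| + |a - b| ≤ 1) {z : ℂ}
    (hz : z ∈ Metric.ball (0 : ℂ) 1) :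
    0 < ((1 + z) ^ (a : ℂ) / (1 - z) ^ (b : ℂ)).re := by
  have hz1 : ‖z‖ < 1 := by simpa using mem_ball_zero_iff.mp hz
  have hrep : 0 < (1 + z).re := by
    have := Complex.abs_re_le_norm z
    simp only [Complex.add_re, Complex.one_re]
    have : -z.re ≤ |z.re| := neg_le_abs _
    linarith [Complex.abs_re_le_norm z]
  have hrem : 0 < (1 - z).re := by
    simp only [Complex.sub_re, Complex.one_re]
    linarith [Complex.abs_re_le_norm z, le_abs_self z.re]
  have hnep : (1 + z) ≠ 0 := fun h => by simp [h] at hrep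
  have hnem : (1 - z) ≠ 0 := fun h => by simp [h] at hrem
  have hns : Complex.normSq z < 1 := by
    rw [← Complex.sq_norm]; nlinarith [norm_nonneg z]
  have hnsm : 0 < Complex.normSq (1 - z) := Complex.normSq_pos.2 hnem
  have hreq : 0 < ((1 + z) / (1 - z)).re := by
    rw [Complex.div_re]
    have h1 : (1 + z).re * (1 - z).re + (1 + z).im * (1 - z).im = 1 - Complex.normSq z := by
      simp [Complex.normSq_apply]; ring
    rw [← add_div]
    rw [h1]
    exact div_pos (by linarith) hnsm
  have hα : |(1 + z).arg| < Real.pi / 2 :=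
    Complex.abs_arg_lt_pi_div_two_iff.2 (Or.inl hrep)
  have hβ : |(1 - z).arg| < Real.pi / 2 :=
    Complex.abs_arg_lt_pi_div_two_iff.2 (Or.inl hrem)
  have hγ : |((1 + z) / (1 - z)).arg| < Real.pi / 2 :=
    Complex.abs_arg_lt_pi_div_two_iff.2 (Or.inl hreq)
  -- arg (1+z) = arg ((1+z)/(1-z)) + arg (1-z)
  have hargsum : (1 + z).arg = ((1 + z) / (1 - z)).arg + (1 - z).arg := by
    have hq0 : (1 + z) / (1 - z) ≠ 0 := div_ne_zero hnep hnem
    have hmem : ((1 + z) / (1 - z)).arg + (1 - z).arg ∈ Set.Ioc (-Real.pi) Real.pi := by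
      constructor
      · have := abs_lt.1 hγ; have := abs_lt.1 hβ; linarith [Real.pi_pos]
      · have := abs_lt.1 hγ; have := abs_lt.1 hβ; linarith [Real.pi_pos]
    have := Complex.arg_mul hq0 hnem hmem
    rwa [div_mul_cancel₀ _ hnem] at this
  have hαβ : |(1 + z).arg - (1 - z).arg| < Real.pi / 2 := by
    rw [hargsum]; simpa using hγ
  -- bound on the imaginary part
  have hbound : |(1 + z).arg * a - (1 - z).arg * b| < Real.pi / 2 := by
    rcases le_total |a| |b| with h | h
    · exact auxbound (by rwa [min_eq_left h] at hab) hβ hαβ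
    · have h1 : |b| + |b - a| ≤ 1 := by
        rw [min_eq_right h] at hab
        rwa [abs_sub_comm] at hab
      have := auxbound h1 hα (by rwa [abs_sub_comm] at hαβ)
      rwa [show (1 - z).arg * b - (1 + z).arg * a = -((1 + z).arg * a - (1 - z).arg * b) by ring,
        abs_neg] at this
  -- rewrite as exponential
  rw [Complex.cpow_def_of_ne_zero hnep, Complex.cpow_def_of_ne_zero hnem, ← Complex.exp_sub,
    Complex.exp_re]
  have him : (Complex.log (1 + z) * (a : ℂ) - Complex.log (1 - z) * (b : ℂ)).im
      = (1 + z).arg * a - (1 - z).arg * b := by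
    simp [Complex.sub_im, Complex.mul_im, Complex.log_im]
  rw [him]
  have hcos : 0 < Real.cos ((1 + z).arg * a - (1 - z).arg * b) := by
    apply Real.cos_pos_of_mem_Ioo
    constructor
    · linarith [(abs_lt.1 hbound).1]
    · linarith [(abs_lt.1 hbound).2]
  positivity

end aux


theorem stmt7 (a b : ℝ) (hab : min |a| |b| + |a - b| ≤ 1) :
    (∀ z ∈ Metric.ball (0 : ℂ) 1,
        |Complex.arg ((1 + z) ^ (a : ℂ) / (1 - z) ^ (b : ℂ))| < Real.pi / 2) ∧
    ∀ H : ℂ → ℂ,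
      (∀ z ∈ Metric.ball (0 : ℂ) 1, HasDerivAt H ((1 + z) ^ (a : ℂ) / (1 - z) ^ (b : ℂ)) z) →
      Set.InjOn H (Metric.ball (0 : ℂ) 1) := by
  refine ⟨fun z hz => Complex.abs_arg_lt_pi_div_two_iff.2 (Or.inl (repos a b hab hz)), ?_⟩
  intro H hH x hx y hy hxy
  by_contra hne
  set u : ℂ := y - x with hu
  have hu0 : u ≠ 0 := sub_ne_zero.2 (Ne.symm hne)
  set f : ℝ → ℝ := fun t => ((H (x + t • u)) * (starRingEnd ℂ) u).re with hf
  have hmem : ∀ t ∈ Set.Icc (0 : ℝ) 1, x + t • u ∈ Metric.ball (0 : ℂ) 1 := fun t ht =>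
    (convex_ball (0 : ℂ) 1).add_smul_sub_mem hx hy ht
  have hdf : ∀ t ∈ Set.Icc (0 : ℝ) 1, HasDerivAt f
      ((u * ((1 + (x + t • u)) ^ (a : ℂ) / (1 - (x + t • u)) ^ (b : ℂ)) * (starRingEnd ℂ) u).re) t := by
    intro t ht
    have hc : HasDerivAt (fun s : ℝ => x + s • u) u t := by
      simpa using ((hasDerivAt_id t).smul_const u).const_add x
    have hHc : HasDerivAt (fun s : ℝ => H (x + s • u))
        (u • ((1 + (x + t • u)) ^ (a : ℂ) / (1 - (x + t • u)) ^ (b : ℂ))) t :=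
      (hH _ (hmem t ht)).scomp t hc
    have hmul := hHc.mul_const ((starRingEnd ℂ) u)
    have := Complex.reCLM.hasFDerivAt.comp_hasDerivAt t hmul
    simpa [hf, Function.comp_def, smul_eq_mul] using this
  have hcont : ContinuousOn f (Set.Icc 0 1) := fun t ht =>
    ((hdf t ht).continuousAt).continuousWithinAt
  have hpos : ∀ t ∈ interior (Set.Icc (0 : ℝ) 1), 0 < deriv f t := by
    intro t ht
    rw [interior_Icc] at ht
    have ht' : t ∈ Set.Icc (0 : ℝ) 1 := ⟨ht.1.le, ht.2.le⟩
    rw [(hdf t ht').deriv]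
    have heq : u * ((1 + (x + t • u)) ^ (a : ℂ) / (1 - (x + t • u)) ^ (b : ℂ)) * (starRingEnd ℂ) u
        = ((Complex.normSq u : ℝ) : ℂ) * ((1 + (x + t • u)) ^ (a : ℂ) / (1 - (x + t • u)) ^ (b : ℂ)) := by
      rw [mul_right_comm, Complex.mul_conj]
    rw [heq, Complex.re_ofReal_mul]
    exact mul_pos (Complex.normSq_pos.2 hu0) (repos a b hab (hmem t ht'))
  have hmono := strictMonoOn_of_deriv_pos (convex_Icc (0 : ℝ) 1) hcont hpos
  have h01 := hmono (Set.left_mem_Icc.2 zero_le_one) (Set.right_mem_Icc.2 zero_le_one) zero_lt_one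
  have hf0 : f 0 = (H x * (starRingEnd ℂ) u).re := by simp [hf]
  have hf1 : f 1 = (H y * (starRingEnd ℂ) u).re := by simp [hf, hu]
  rw [hf0, hf1, hxy] at h01
  exact lt_irrefl _ h01
end

section
/- If a, b are real with a ≤ 0 ≤ b ≤ a+2, then H_{a,b}(z) = ∫₀^z (1+t)^a/(1-t)^b dt is a convex univalent function in the unit disk; specifically, Re(1 + z·H_{a,b}''(z)/H_{a,b}'(z)) > 0 for all z in D. -/
open Complex Metric

noncomputable section
namespace Stmt8Aux
open Set Real

/-- The analytic branch of `log H'`. -/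
def LL (a b : ℝ) (z : ℂ) : ℂ := (a:ℂ) * Complex.log (1+z) - (b:ℂ) * Complex.log (1-z)

lemma one_add_mem {z : ℂ} (hz : ‖z‖ < 1) : (1:ℂ)+z ∈ slitPlane := by
  refine Or.inl ?_
  have h := Complex.abs_re_le_norm z
  simp only [Complex.add_re, Complex.one_re]
  have := abs_le.1 h
  linarith

lemma one_sub_mem {z : ℂ} (hz : ‖z‖ < 1) : (1:ℂ)-z ∈ slitPlane := by
  refine Or.inl ?_
  have h := Complex.abs_re_le_norm z
  simp only [Complex.sub_re, Complex.one_re]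
  have := abs_le.1 h
  linarith

lemma one_add_ne {z : ℂ} (hz : ‖z‖ < 1) : (1:ℂ)+z ≠ 0 :=
  Complex.slitPlane_ne_zero (one_add_mem hz)

lemma one_sub_ne {z : ℂ} (hz : ‖z‖ < 1) : (1:ℂ)-z ≠ 0 :=
  Complex.slitPlane_ne_zero (one_sub_mem hz)

lemma sq_lt {z : ℂ} (hz : ‖z‖ < 1) : z.re * z.re + z.im * z.im < 1 := by
  have h1 : Complex.normSq z < 1 := by
    rw [← Complex.sq_norm]
    have h2 : ‖z‖ < 1 := hz
    nlinarith [norm_nonneg z]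
  rwa [Complex.normSq_apply] at h1

/-- Part 1: positivity of the real part. -/
lemma reQ_pos {a b : ℝ} (ha : a ≤ 0) (hb0 : 0 ≤ b) (hb : b ≤ a + 2) {z : ℂ} (hz : ‖z‖ < 1) :
    0 < (1 + (a : ℂ) * z / (1 + z) + (b : ℂ) * z / (1 - z)).re := by
  have hsq := sq_lt hz
  have hn1 : 0 < Complex.normSq (1+z) := Complex.normSq_pos.2 (one_add_ne hz)
  have hn2 : 0 < Complex.normSq (1-z) := Complex.normSq_pos.2 (one_sub_ne hz)
  set X := (z/(1+z)).re with hX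
  set Y := (z/(1-z)).re with hY
  have hn1' : 0 < (1+z).re * (1+z).re + (1+z).im * (1+z).im := by
    rw [Complex.normSq_apply] at hn1; exact hn1
  have hn2' : 0 < (1-z).re * (1-z).re + (1-z).im * (1-z).im := by
    rw [Complex.normSq_apply] at hn2; exact hn2
  have hXv : X < 1/2 := by
    rw [hX, Complex.div_re, Complex.normSq_apply, ← add_div, div_lt_iff₀ hn1']
    simp only [Complex.add_re, Complex.add_im, Complex.one_re, Complex.one_im]
    nlinarith
  have hYv : -(1/2) < Y := by
    rw [hY, Complex.div_re, Complex.normSq_apply, ← add_div, neg_lt, ← neg_div,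
      div_lt_iff₀ hn2']
    simp only [Complex.sub_re, Complex.sub_im, Complex.one_re, Complex.one_im]
    nlinarith
  have hre : (1 + (a : ℂ) * z / (1 + z) + (b : ℂ) * z / (1 - z)).re = 1 + a * X + b * Y := by
    rw [hX, hY]
    have e1 : (a : ℂ) * z / (1 + z) = (a:ℂ) * (z / (1+z)) := by ring
    have e2 : (b : ℂ) * z / (1 - z) = (b:ℂ) * (z / (1-z)) := by ring
    rw [e1, e2]
    simp [Complex.add_re, Complex.mul_re, Complex.ofReal_re, Complex.ofReal_im]
  rw [hre]
  rcases ha.lt_or_eq with ha' | ha'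
  · nlinarith [mul_pos (neg_pos.2 ha') (by linarith : (0:ℝ) < 1/2 - X),
      mul_nonneg hb0 (by linarith : (0:ℝ) ≤ Y + 1/2)]
  · rcases hb0.lt_or_eq with hb' | hb'
    · nlinarith [mul_pos hb' (by linarith : (0:ℝ) < Y + 1/2)]
    · rw [ha', ← hb']; norm_num

/-- The circle parametrization. -/
def crc (r θ : ℝ) : ℂ := (r:ℂ) * Complex.exp (θ * Complex.I)

lemma norm_crc {r : ℝ} (hr : 0 ≤ r) (θ : ℝ) : ‖crc r θ‖ = r := by
  rw [crc, norm_mul, Complex.norm_exp_ofReal_mul_I,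
    Complex.norm_real, Real.norm_of_nonneg hr, mul_one]

lemma crc_per_int (r θ : ℝ) (k : ℤ) : crc r (θ + k * (2 * π)) = crc r θ := by
  unfold crc
  rw [Complex.ofReal_add, add_mul, Complex.exp_add]
  have h : ((((k:ℝ) * (2 * π) : ℝ)):ℂ) * Complex.I = (k:ℂ) * (2 * (π:ℂ) * Complex.I) := by
    push_cast; ring
  rw [h, Complex.exp_int_mul_two_pi_mul_I, mul_one]

lemma crc_per (r θ : ℝ) : crc r (θ + 2 * π) = crc r θ := by
  have := crc_per_int r θ 1
  simpa using this


lemma hasDerivAt_LL (a b : ℝ) {z : ℂ} (hz : ‖z‖ < 1) :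
    HasDerivAt (LL a b) ((a:ℂ)/(1+z) + (b:ℂ)/(1-z)) z := by
  have h1 : HasDerivAt (fun z : ℂ => Complex.log (1+z)) (1+z)⁻¹ z := by
    have := (Complex.hasDerivAt_log (one_add_mem hz)).comp z
      ((hasDerivAt_id z).const_add (1:ℂ))
    simpa [Function.comp_def] using this
  have h2 : HasDerivAt (fun z : ℂ => Complex.log (1-z)) (-(1-z)⁻¹) z := by
    have := (Complex.hasDerivAt_log (one_sub_mem hz)).comp z
      ((hasDerivAt_id z).neg.const_add (1:ℂ))
    simpa [Function.comp_def] using this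
  have := (h1.const_mul (a:ℂ)).sub (h2.const_mul (b:ℂ))
  refine this.congr_deriv ?_
  ring

lemma hasDerivAt_crc (r θ : ℝ) : HasDerivAt (crc r) (crc r θ * Complex.I) θ := by
  have h1 : HasDerivAt (fun θ : ℝ => (θ:ℂ) * Complex.I) Complex.I θ := by
    simpa using (Complex.ofRealCLM.hasDerivAt (x := θ)).mul_const Complex.I
  have := (h1.cexp).const_mul (r:ℂ)
  show HasDerivAt (fun θ : ℝ => (r:ℂ) * Complex.exp (θ * Complex.I)) _ θ
  simpa [crc, mul_assoc] using this

/-- Tangent angle of the curve `θ ↦ H (crc r θ)`. -/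
def ψ (a b r θ : ℝ) : ℝ := θ + π/2 + (LL a b (crc r θ)).im

/-- Speed of the curve. -/
def ρ (a b r θ : ℝ) : ℝ := r * Real.exp ((LL a b (crc r θ)).re)

lemma rho_pos {a b r : ℝ} (hr : 0 < r) (θ : ℝ) : 0 < ρ a b r θ :=
  mul_pos hr (Real.exp_pos _)

/-- Composite derivative of `LL ∘ crc`. -/
lemma hasDerivAt_LL_crc (a b : ℝ) {r : ℝ} (hr0 : 0 ≤ r) (hr1 : r < 1) (θ : ℝ) :
    HasDerivAt (fun θ => LL a b (crc r θ))
      (((a:ℂ)/(1+crc r θ) + (b:ℂ)/(1-crc r θ)) * (crc r θ * Complex.I)) θ := by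
  have hz : ‖crc r θ‖ < 1 := by rw [norm_crc hr0]; exact hr1
  exact (hasDerivAt_LL a b hz).comp θ (hasDerivAt_crc r θ)

lemma hasDerivAt_psi (a b : ℝ) {r : ℝ} (hr0 : 0 ≤ r) (hr1 : r < 1) (θ : ℝ) :
    HasDerivAt (ψ a b r)
      ((1 + (a:ℂ) * crc r θ / (1 + crc r θ) + (b:ℂ) * crc r θ / (1 - crc r θ)).re) θ := by
  have h1 := hasDerivAt_LL_crc a b hr0 hr1 θ
  have h2 : HasDerivAt (fun θ => (LL a b (crc r θ)).im)
      ((((a:ℂ)/(1+crc r θ) + (b:ℂ)/(1-crc r θ)) * (crc r θ * Complex.I)).im) θ :=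
    (Complex.imCLM.hasFDerivAt.comp_hasDerivAt θ h1)
  have h3 := ((hasDerivAt_id θ).add_const (π/2)).add h2
  refine h3.congr_deriv ?_
  set z := crc r θ
  have e : (1:ℂ) + ↑a * z/(1+z) + ↑b*z/(1-z) = 1 + ((↑a/(1+z) + ↑b/(1-z)) * z) := by ring
  have e2 : ((↑a/(1+z)+↑b/(1-z)) * (z*Complex.I)) = (((↑a/(1+z)+↑b/(1-z)) * z) * Complex.I) := by
    ring
  rw [e, e2, Complex.mul_I_im, Complex.add_re, Complex.one_re]

lemma psi_per (a b r θ : ℝ) : ψ a b r (θ + 2*π) = ψ a b r θ + 2*π := by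
  unfold ψ
  rw [crc_per]
  ring

lemma psi_strictMono {a b : ℝ} (ha : a ≤ 0) (hb0 : 0 ≤ b) (hb : b ≤ a + 2) {r : ℝ}
    (hr0 : 0 ≤ r) (hr1 : r < 1) : StrictMono (ψ a b r) := by
  apply strictMono_of_deriv_pos
  intro θ
  rw [(hasDerivAt_psi a b hr0 hr1 θ).deriv]
  exact reQ_pos ha hb0 hb (by rw [norm_crc hr0]; exact hr1)

/-- `exp (LL a b z)` is the concrete derivative `(1+z)^a / (1-z)^b`. -/
lemma exp_LL (a b : ℝ) {z : ℂ} (hz : ‖z‖ < 1) :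
    Complex.exp (LL a b z) = (1+z) ^ (a:ℂ) / (1-z) ^ (b:ℂ) := by
  rw [Complex.cpow_def_of_ne_zero (one_add_ne hz), Complex.cpow_def_of_ne_zero (one_sub_ne hz),
    ← Complex.exp_sub]
  unfold LL
  ring_nf

lemma tangent_id' (c : ℂ) (r θ : ℝ) :
    Complex.exp c * (((r:ℂ) * Complex.exp ((θ:ℝ) * Complex.I)) * Complex.I)
      = ((r * Real.exp c.re : ℝ) : ℂ)
        * Complex.exp (((θ + π/2 + c.im : ℝ) : ℂ) * Complex.I) := by
  have h2 : ((θ + π/2 + c.im : ℝ) : ℂ) * Complex.I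
      = (θ:ℝ) * Complex.I + ((π/2 : ℝ) : ℂ) * Complex.I + (c.im : ℝ) * Complex.I := by
    push_cast; ring
  have h3 : Complex.exp (((π/2 : ℝ) : ℂ) * Complex.I) = Complex.I := by
    rw [Complex.exp_mul_I, ← Complex.ofReal_cos, ← Complex.ofReal_sin]
    simp [Real.cos_pi_div_two, Real.sin_pi_div_two]
  have h4 : Complex.exp ((c.re : ℂ)) * Complex.exp ((c.im : ℝ) * Complex.I)
      = Complex.exp c := by
    rw [← Complex.exp_add, Complex.re_add_im]
  rw [h2, Complex.exp_add, Complex.exp_add, h3, Complex.ofReal_mul, Complex.ofReal_exp, ← h4]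
  ring

/-- The key tangent identity: `H'(z) · (z i) = ρ e^{iψ}` for `z = crc r θ`. -/
lemma tangent_id (a b : ℝ) {r : ℝ} (θ : ℝ) :
    Complex.exp (LL a b (crc r θ)) * (crc r θ * Complex.I)
      = (ρ a b r θ : ℝ) * Complex.exp ((ψ a b r θ : ℝ) * Complex.I) := by
  have := tangent_id' (LL a b (crc r θ)) r θ
  rw [crc] at this ⊢
  rw [this]
  rfl

/-- Derivative of the boundary curve. -/
lemma hasDerivAt_curve {H : ℂ → ℂ} {a b : ℝ}
    (hH : ∀ z ∈ ball (0:ℂ) 1, HasDerivAt H (Complex.exp (LL a b z)) z)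
    {r : ℝ} (hr0 : 0 ≤ r) (hr1 : r < 1) (θ : ℝ) :
    HasDerivAt (fun θ => H (crc r θ))
      ((ρ a b r θ : ℝ) * Complex.exp ((ψ a b r θ : ℝ) * Complex.I)) θ := by
  have hz : crc r θ ∈ ball (0:ℂ) 1 := by
    rw [mem_ball_zero_iff, norm_crc hr0]; exact hr1
  have := (hH _ hz).comp θ (hasDerivAt_crc r θ)
  rwa [tangent_id] at this

/-- The support-line functional at parameter `θ`. -/
def fln (a b : ℝ) (H : ℂ → ℂ) (r θ : ℝ) (w : ℂ) : ℝ :=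
  (Complex.exp (-((ψ a b r θ : ℝ) : ℂ) * Complex.I) * (w - H (crc r θ))).im

lemma hasDerivAt_hfun {H : ℂ → ℂ} {a b : ℝ}
    (hH : ∀ z ∈ ball (0:ℂ) 1, HasDerivAt H (Complex.exp (LL a b z)) z)
    {r : ℝ} (hr0 : 0 ≤ r) (hr1 : r < 1) (θ₀ t : ℝ) :
    HasDerivAt (fun t => fln a b H r θ₀ (H (crc r t)))
      (ρ a b r t * Real.sin (ψ a b r t - ψ a b r θ₀)) t := by
  have hγ := hasDerivAt_curve hH hr0 hr1 t
  have h1 := (hγ.sub_const (H (crc r θ₀))).const_mul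
    (Complex.exp (-((ψ a b r θ₀ : ℝ) : ℂ) * Complex.I))
  have h2 := Complex.imCLM.hasFDerivAt.comp_hasDerivAt t h1
  refine h2.congr_deriv ?_
  have e : Complex.exp (-((ψ a b r θ₀ : ℝ) : ℂ) * Complex.I) *
        ((ρ a b r t : ℝ) * Complex.exp ((ψ a b r t : ℝ) * Complex.I))
      = ((ρ a b r t : ℝ) : ℂ) * Complex.exp (((ψ a b r t - ψ a b r θ₀ : ℝ) : ℂ) * Complex.I) := by
    have harg : (-((ψ a b r θ₀ : ℝ) : ℂ) * Complex.I) + ((ψ a b r t : ℝ) : ℂ) * Complex.I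
        = ((ψ a b r t - ψ a b r θ₀ : ℝ) : ℂ) * Complex.I := by push_cast; ring
    calc Complex.exp (-((ψ a b r θ₀ : ℝ) : ℂ) * Complex.I) *
          ((ρ a b r t : ℝ) * Complex.exp ((ψ a b r t : ℝ) * Complex.I))
        = ((ρ a b r t : ℝ) : ℂ) * (Complex.exp (-((ψ a b r θ₀ : ℝ) : ℂ) * Complex.I) *
            Complex.exp ((ψ a b r t : ℝ) * Complex.I)) := by ring
      _ = _ := by rw [← Complex.exp_add, harg]
  rw [show (Complex.imCLM (Complex.exp (-((ψ a b r θ₀ : ℝ) : ℂ) * Complex.I) *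
        ((ρ a b r t : ℝ) * Complex.exp ((ψ a b r t : ℝ) * Complex.I)))) =
      (Complex.exp (-((ψ a b r θ₀ : ℝ) : ℂ) * Complex.I) *
        ((ρ a b r t : ℝ) * Complex.exp ((ψ a b r t : ℝ) * Complex.I))).im from rfl, e,
    Complex.mul_im, Complex.ofReal_re, Complex.ofReal_im, Complex.exp_ofReal_mul_I_im]
  ring

/-- Claim A: the curve lies strictly on the positive side of each tangent line. -/
lemma claimA {H : ℂ → ℂ} {a b : ℝ} (ha : a ≤ 0) (hb0 : 0 ≤ b) (hb : b ≤ a + 2)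
    (hH : ∀ z ∈ ball (0:ℂ) 1, HasDerivAt H (Complex.exp (LL a b z)) z)
    {r : ℝ} (hr0 : 0 < r) (hr1 : r < 1) {θ₀ θ : ℝ} (h1 : θ₀ < θ) (h2 : θ < θ₀ + 2*π) :
    0 < fln a b H r θ₀ (H (crc r θ)) := by
  have hr0' : (0:ℝ) ≤ r := hr0.le
  set g : ℝ → ℝ := fun t => fln a b H r θ₀ (H (crc r t)) with hg
  have hgd : ∀ t, HasDerivAt g (ρ a b r t * Real.sin (ψ a b r t - ψ a b r θ₀)) t :=
    fun t => hasDerivAt_hfun hH hr0' hr1 θ₀ t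
  have hgc : Continuous g :=
    continuous_iff_continuousAt.2 fun t => (hgd t).differentiableAt.continuousAt
  have hψmono := psi_strictMono ha hb0 hb hr0' hr1
  have hψc : Continuous (ψ a b r) := continuous_iff_continuousAt.2
    fun t => (hasDerivAt_psi a b hr0' hr1 t).differentiableAt.continuousAt
  have hψper : ψ a b r (θ₀ + 2*π) = ψ a b r θ₀ + 2*π := psi_per a b r θ₀
  have hπ : (0:ℝ) < π := Real.pi_pos
  -- find θ₁ with ψ θ₁ = ψ θ₀ + π
  have hmem : ψ a b r θ₀ + π ∈ Ioo (ψ a b r θ₀) (ψ a b r (θ₀ + 2*π)) := by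
    rw [hψper]; constructor <;> linarith
  obtain ⟨θ₁, hθ₁mem, hθ₁⟩ := intermediate_value_Ioo (by linarith : θ₀ ≤ θ₀ + 2*π)
    hψc.continuousOn hmem
  have hg0 : g θ₀ = 0 := by simp [hg, fln]
  have hg2π : g (θ₀ + 2*π) = 0 := by simp [hg, fln, crc_per]
  have hmonoOn : StrictMonoOn g (Icc θ₀ θ₁) := by
    apply strictMonoOn_of_deriv_pos (convex_Icc _ _) hgc.continuousOn
    intro t ht
    rw [interior_Icc, mem_Ioo] at ht
    rw [(hgd t).deriv]
    apply mul_pos (rho_pos hr0 t)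
    apply Real.sin_pos_of_pos_of_lt_pi
    · have := hψmono ht.1; linarith
    · have := hψmono ht.2; rw [hθ₁] at this; linarith
  have hantiOn : StrictAntiOn g (Icc θ₁ (θ₀ + 2*π)) := by
    apply strictAntiOn_of_deriv_neg (convex_Icc _ _) hgc.continuousOn
    intro t ht
    rw [interior_Icc, mem_Ioo] at ht
    rw [(hgd t).deriv]
    apply mul_neg_of_pos_of_neg (rho_pos hr0 t)
    have hlo : π < ψ a b r t - ψ a b r θ₀ := by
      have := hψmono ht.1; rw [hθ₁] at this; linarith
    have hhi : ψ a b r t - ψ a b r θ₀ < 2*π := by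
      have := hψmono ht.2; rw [hψper] at this; linarith
    have hp := Real.sin_pos_of_pos_of_lt_pi
      (by linarith : (0:ℝ) < ψ a b r t - ψ a b r θ₀ - π) (by linarith)
    have e : Real.sin (ψ a b r t - ψ a b r θ₀ - π) = -Real.sin (ψ a b r t - ψ a b r θ₀) := by
      rw [show ψ a b r t - ψ a b r θ₀ - π = -(π - (ψ a b r t - ψ a b r θ₀)) by ring,
        Real.sin_neg, Real.sin_pi_sub]
    linarith
  rcases le_or_gt θ θ₁ with hcase | hcase
  · have := hmonoOn (left_mem_Icc.2 hθ₁mem.1.le) ⟨h1.le, hcase⟩ h1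
    rw [hg0] at this
    exact this
  · have := hantiOn ⟨hcase.le, h2.le⟩ (right_mem_Icc.2 (by linarith)) h2
    rw [hg2π] at this
    exact this

/-- Weak version of Claim A, valid for all angles. -/
lemma claimA_le {H : ℂ → ℂ} {a b : ℝ} (ha : a ≤ 0) (hb0 : 0 ≤ b) (hb : b ≤ a + 2)
    (hH : ∀ z ∈ ball (0:ℂ) 1, HasDerivAt H (Complex.exp (LL a b z)) z)
    {r : ℝ} (hr0 : 0 < r) (hr1 : r < 1) (θ₀ θ : ℝ) :
    0 ≤ fln a b H r θ₀ (H (crc r θ)) := by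
  obtain ⟨k, hk, -⟩ := existsUnique_add_zsmul_mem_Ico Real.two_pi_pos θ θ₀
  rw [mem_Ico] at hk
  have hcrc : crc r (θ + k • (2*π)) = crc r θ := by
    rw [zsmul_eq_mul, crc_per_int]
  rcases eq_or_lt_of_le hk.1 with heq | hlt
  · rw [← hcrc, ← heq]
    simp [fln]
  · rw [← hcrc]
    exact (claimA ha hb0 hb hH hr0 hr1 hlt hk.2).le

/-- Maximum principle: image of the small ball is on the positive side of each tangent. -/
lemma maxmod {H : ℂ → ℂ} {a b : ℝ} (ha : a ≤ 0) (hb0 : 0 ≤ b) (hb : b ≤ a + 2)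
    (hH : ∀ z ∈ ball (0:ℂ) 1, HasDerivAt H (Complex.exp (LL a b z)) z)
    {r : ℝ} (hr0 : 0 < r) (hr1 : r < 1) {z : ℂ} (hz : z ∈ ball (0:ℂ) r) (θ : ℝ) :
    0 ≤ fln a b H r θ (H z) := by
  have hHd : DifferentiableOn ℂ H (ball (0:ℂ) 1) :=
    fun w hw => ((hH w hw).differentiableAt).differentiableWithinAt
  set c : ℂ := Complex.exp (-((ψ a b r θ : ℝ) : ℂ) * Complex.I) with hc
  set w₀ : ℂ := H (crc r θ) with hw₀
  set G : ℂ → ℂ := fun ζ => Complex.exp (Complex.I * (c * (H ζ - w₀))) with hG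
  have hsub : closedBall (0:ℂ) r ⊆ ball (0:ℂ) 1 := fun x hx => by
    rw [mem_closedBall_zero_iff] at hx
    rw [mem_ball_zero_iff]
    linarith
  have hGd : DifferentiableOn ℂ G (closedBall (0:ℂ) r) :=
    (((hHd.mono hsub).sub_const w₀).const_mul c).const_mul Complex.I |>.cexp
  have hnorm : ∀ ζ, ‖G ζ‖ = Real.exp (-(c * (H ζ - w₀)).im) := by
    intro ζ
    rw [hG]
    simp only [Complex.norm_exp]
    congr 1
    simp [Complex.mul_re]
  have hbd : ∀ ζ ∈ frontier (ball (0:ℂ) r), ‖G ζ‖ ≤ 1 := by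
    intro ζ hζ
    rw [frontier_ball _ (ne_of_gt hr0)] at hζ
    rw [mem_sphere_zero_iff_norm] at hζ
    have habs : ‖ζ‖ = r := hζ
    have hζeq : ζ = crc r ζ.arg := by
      rw [crc, ← habs, Complex.norm_mul_exp_arg_mul_I]
    have h0 : 0 ≤ fln a b H r θ (H (crc r ζ.arg)) := claimA_le ha hb0 hb hH hr0 hr1 θ ζ.arg
    rw [hnorm, Real.exp_le_one_iff, neg_nonpos]
    rw [fln] at h0
    rw [← hζeq] at h0
    exact h0
  have hcl : z ∈ closure (ball (0:ℂ) r) := subset_closure hz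
  have := norm_le_of_forall_mem_frontier_norm_le isBounded_ball
    ((hGd.mono (by rw [closure_ball _ (ne_of_gt hr0)])).diffContOnCl) hbd hcl
  rw [hnorm, Real.exp_le_one_iff, neg_nonpos] at this
  exact this

/-- The closed convex "inside" determined by all tangent half-planes. -/
def Sbar (a b : ℝ) (H : ℂ → ℂ) (r : ℝ) : Set ℂ := {w | ∀ θ : ℝ, 0 ≤ fln a b H r θ w}

lemma convex_Sbar (a b : ℝ) (H : ℂ → ℂ) (r : ℝ) : Convex ℝ (Sbar a b H r) := by
  intro w₁ h₁ w₂ h₂ s t hs ht hst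
  intro θ
  have e : (s • w₁ + t • w₂ : ℂ) - H (crc r θ)
      = (s:ℂ) * (w₁ - H (crc r θ)) + (t:ℂ) * (w₂ - H (crc r θ)) := by
    have : ((s:ℂ) + (t:ℂ)) = 1 := by
      rw [← Complex.ofReal_add, hst, Complex.ofReal_one]
    simp only [Complex.real_smul]
    linear_combination (H (crc r θ)) * this
  rw [fln, e, mul_add, Complex.add_im]
  have e1 : ∀ u : ℂ, Complex.exp (-((ψ a b r θ : ℝ) : ℂ) * Complex.I) * ((s:ℂ) * u)
      = (s:ℂ) * (Complex.exp (-((ψ a b r θ : ℝ) : ℂ) * Complex.I) * u) := fun u => by ring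
  have e2 : ∀ u : ℂ, Complex.exp (-((ψ a b r θ : ℝ) : ℂ) * Complex.I) * ((t:ℂ) * u)
      = (t:ℂ) * (Complex.exp (-((ψ a b r θ : ℝ) : ℂ) * Complex.I) * u) := fun u => by ring
  have him : ∀ (x : ℝ) (u : ℂ), ((x:ℂ) * u).im = x * u.im := fun x u => by
    simp [Complex.mul_im]
  rw [e1, e2, him, him]
  exact add_nonneg (mul_nonneg hs (h₁ θ)) (mul_nonneg ht (h₂ θ))

/-- Claim C: boundary points are not interior to `Sbar`. -/
lemma boundary_not_interior (a b : ℝ) (H : ℂ → ℂ) {r : ℝ} (θ : ℝ) :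
    H (crc r θ) ∉ interior (Sbar a b H r) := by
  intro hmem
  rw [mem_interior_iff_mem_nhds, Metric.mem_nhds_iff] at hmem
  obtain ⟨ε, hε, hball⟩ := hmem
  set v : ℂ := -(ε/2 : ℝ) * Complex.I * Complex.exp (((ψ a b r θ : ℝ) : ℂ) * Complex.I) with hv
  have hmem' : H (crc r θ) + v ∈ Sbar a b H r := by
    apply hball
    rw [mem_ball_iff_norm]
    simp only [add_sub_cancel_left]
    rw [hv]
    rw [norm_mul, norm_mul]
    rw [Complex.norm_exp_ofReal_mul_I]
    simp only [norm_neg, Complex.norm_real, Complex.norm_I]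
    rw [Real.norm_eq_abs, abs_of_pos (by linarith : (0:ℝ) < ε/2)]
    linarith
  have := hmem' θ
  rw [fln, add_sub_cancel_left, hv] at this
  have e : Complex.exp (-((ψ a b r θ : ℝ) : ℂ) * Complex.I) *
      (-(ε/2 : ℝ) * Complex.I * Complex.exp (((ψ a b r θ : ℝ) : ℂ) * Complex.I))
      = -(ε/2 : ℝ) * Complex.I := by
    rw [show Complex.exp (-((ψ a b r θ : ℝ) : ℂ) * Complex.I) *
        (-(ε/2 : ℝ) * Complex.I * Complex.exp (((ψ a b r θ : ℝ) : ℂ) * Complex.I))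
        = -(ε/2 : ℝ) * Complex.I * (Complex.exp (-((ψ a b r θ : ℝ) : ℂ) * Complex.I) *
          Complex.exp (((ψ a b r θ : ℝ) : ℂ) * Complex.I)) from by ring,
      ← Complex.exp_add]
    norm_num
  rw [e] at this
  simp only [Complex.mul_im, Complex.neg_re, Complex.ofReal_re, Complex.I_im, Complex.neg_im,
    Complex.ofReal_im, Complex.I_re] at this
  norm_num at this
  linarith

/-- Openness of the image. -/
lemma image_open {H : ℂ → ℂ} {a b : ℝ}
    (hH : ∀ z ∈ ball (0:ℂ) 1, HasDerivAt H (Complex.exp (LL a b z)) z)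
    {r : ℝ} (hr1 : r < 1) : IsOpen (H '' ball (0:ℂ) r) := by
  have hHd : DifferentiableOn ℂ H (ball (0:ℂ) 1) :=
    fun w hw => ((hH w hw).differentiableAt).differentiableWithinAt
  rw [isOpen_iff_mem_nhds]
  rintro w ⟨z, hz, rfl⟩
  have hz1 : z ∈ ball (0:ℂ) 1 := by
    rw [mem_ball_zero_iff] at hz ⊢
    exact hz.trans_le hr1.le
  have han : AnalyticAt ℂ H z := hHd.analyticAt (isOpen_ball.mem_nhds hz1)
  have hstrict : HasStrictDerivAt H (deriv H z) z :=
    (han.contDiffAt (n := 1)).hasStrictDerivAt one_ne_zero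
  have hne : deriv H z ≠ 0 := by
    rw [(hH z hz1).deriv]
    exact Complex.exp_ne_zero _
  have hmap := hstrict.map_nhds_eq hne
  rw [← hmap, Filter.mem_map]
  exact Filter.mem_of_superset (isOpen_ball.mem_nhds hz) (fun x hx => ⟨x, hx, rfl⟩)

/-- The central structure lemma: `H '' ball r = interior (Sbar)`. -/
lemma image_eq_interior {H : ℂ → ℂ} {a b : ℝ} (ha : a ≤ 0) (hb0 : 0 ≤ b) (hb : b ≤ a + 2)
    (hH : ∀ z ∈ ball (0:ℂ) 1, HasDerivAt H (Complex.exp (LL a b z)) z)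
    {r : ℝ} (hr0 : 0 < r) (hr1 : r < 1) :
    H '' ball (0:ℂ) r = interior (Sbar a b H r) := by
  have hHd : DifferentiableOn ℂ H (ball (0:ℂ) 1) :=
    fun w hw => ((hH w hw).differentiableAt).differentiableWithinAt
  have hsub : closedBall (0:ℂ) r ⊆ ball (0:ℂ) 1 := fun x hx => by
    rw [mem_closedBall_zero_iff] at hx
    rw [mem_ball_zero_iff]
    linarith
  set U : Set ℂ := H '' ball (0:ℂ) r with hU
  have hUopen : IsOpen U := image_open hH hr1
  have hUsub : U ⊆ Sbar a b H r := by
    rintro w ⟨z, hz, rfl⟩ θ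
    exact maxmod ha hb0 hb hH hr0 hr1 hz θ
  have hUV : U ⊆ interior (Sbar a b H r) := interior_maximal hUsub hUopen
  -- closure of U is contained in the image of the closed ball
  have hclU : closure U ⊆ H '' closedBall (0:ℂ) r := by
    apply closure_minimal
    · exact image_mono ball_subset_closedBall
    · exact ((isCompact_closedBall _ _).image_of_continuousOn
        ((hHd.mono hsub).continuousOn)).isClosed
  -- the interior minus closure-of-U argument
  apply Subset.antisymm hUV
  set V := interior (Sbar a b H r) with hV
  have hVpre : IsPreconnected V := ((convex_Sbar a b H r).interior).isPreconnected
  have hVsub : V ⊆ U ∪ (closure U)ᶜ := by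
    intro w hw
    by_cases hcl : w ∈ closure U
    · left
      obtain ⟨z, hz, rfl⟩ := hclU hcl
      rw [mem_closedBall_zero_iff] at hz
      rcases lt_or_eq_of_le hz with hlt | heq
      · exact ⟨z, mem_ball_zero_iff.2 hlt, rfl⟩
      · exfalso
        have habs : ‖z‖ = r := by rw [heq]
        have hzeq : z = crc r z.arg := by
          rw [crc, ← habs, Complex.norm_mul_exp_arg_mul_I]
        rw [hzeq] at hw
        exact boundary_not_interior a b H z.arg hw
    · right; exact hcl
  have hne : (V ∩ U).Nonempty := by
    refine ⟨H 0, hUV ⟨0, mem_ball_zero_iff.2 (by simpa using hr0), rfl⟩, 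
      ⟨0, mem_ball_zero_iff.2 (by simpa using hr0), rfl⟩⟩
  exact hVpre.subset_left_of_subset_union hUopen (isClosed_closure.isOpen_compl)
    (disjoint_compl_right.mono_left subset_closure) hVsub hne

lemma key_neq {H : ℂ → ℂ} {a b : ℝ} (ha : a ≤ 0) (hb0 : 0 ≤ b) (hb : b ≤ a + 2)
    (hH : ∀ z ∈ ball (0:ℂ) 1, HasDerivAt H (Complex.exp (LL a b z)) z)
    {z₁ z₂ : ℂ} (h2 : z₂ ∈ ball (0:ℂ) 1) (hlt : ‖z₁‖ < ‖z₂‖) : H z₁ ≠ H z₂ := by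
  set s := ‖z₂‖ with hs
  have hs0 : 0 < s := lt_of_le_of_lt (norm_nonneg z₁) hlt
  have hs1 : s < 1 := mem_ball_zero_iff.1 h2
  have h1mem : H z₁ ∈ H '' ball (0:ℂ) s := ⟨z₁, mem_ball_zero_iff.2 hlt, rfl⟩
  rw [image_eq_interior ha hb0 hb hH hs0 hs1] at h1mem
  have habs : ‖z₂‖ = s := hs.symm
  have hz2eq : z₂ = crc s z₂.arg := by rw [crc, ← habs, Complex.norm_mul_exp_arg_mul_I]
  intro heq
  rw [heq, hz2eq] at h1mem
  exact boundary_not_interior a b H z₂.arg h1mem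

lemma key_neq_same {H : ℂ → ℂ} {a b : ℝ} (ha : a ≤ 0) (hb0 : 0 ≤ b) (hb : b ≤ a + 2)
    (hH : ∀ z ∈ ball (0:ℂ) 1, HasDerivAt H (Complex.exp (LL a b z)) z)
    {s : ℝ} (hs0 : 0 < s) (hs1 : s < 1) {θ₁ θ₂ : ℝ} (hlt : θ₁ < θ₂) (hlt2 : θ₂ < θ₁ + 2*π) :
    H (crc s θ₁) ≠ H (crc s θ₂) := by
  intro heq
  have := claimA ha hb0 hb hH hs0 hs1 hlt hlt2
  rw [fln, ← heq] at this
  simp at this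

end Stmt8Aux
end

open Stmt8Aux in
theorem stmt8 (a b : ℝ) (ha : a ≤ 0) (hb0 : 0 ≤ b) (hb : b ≤ a + 2) :
    (∀ z ∈ Metric.ball (0 : ℂ) 1,
        0 < (1 + (a : ℂ) * z / (1 + z) + (b : ℂ) * z / (1 - z)).re) ∧
    ∀ H : ℂ → ℂ,
      (∀ z ∈ Metric.ball (0 : ℂ) 1, HasDerivAt H ((1 + z) ^ (a : ℂ) / (1 - z) ^ (b : ℂ)) z) →
      H 0 = 0 →
      Set.InjOn H (Metric.ball (0 : ℂ) 1) ∧ Convex ℝ ((H '' Metric.ball (0 : ℂ) 1) : Set ℂ) := by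
  constructor
  · intro z hz
    exact reQ_pos ha hb0 hb (mem_ball_zero_iff.1 hz)
  · intro H hHyp _
    have hH : ∀ z ∈ ball (0:ℂ) 1, HasDerivAt H (Complex.exp (LL a b z)) z := by
      intro z hz
      rw [exp_LL a b (mem_ball_zero_iff.1 hz)]
      exact hHyp z hz
    constructor
    · -- injectivity
      intro z₁ h₁ z₂ h₂ heq
      by_contra hne
      rcases lt_trichotomy ‖z₁‖ ‖z₂‖ with hlt | heqn | hlt
      · exact key_neq ha hb0 hb hH h₂ hlt heq
      · -- equal norms
        set s := ‖z₁‖ with hs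
        have hs0 : 0 < s := by
          rcases eq_or_lt_of_le (norm_nonneg z₁) with h | h
          · exfalso
            apply hne
            have h1 : z₁ = 0 := norm_eq_zero.1 h.symm
            have h2' : z₂ = 0 := norm_eq_zero.1 (heqn ▸ h.symm)
            rw [h1, h2']
          · exact h
        have hs1 : s < 1 := mem_ball_zero_iff.1 h₁
        have habs1 : ‖z₁‖ = s := hs.symm
        have habs2 : ‖z₂‖ = s := by rw [← heqn]
        have hz1eq : z₁ = crc s z₁.arg := by rw [crc, ← habs1, Complex.norm_mul_exp_arg_mul_I]
        have hz2eq : z₂ = crc s z₂.arg := by rw [crc, ← habs2, Complex.norm_mul_exp_arg_mul_I]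
        have hargne : z₁.arg ≠ z₂.arg := by
          intro h
          apply hne
          rw [hz1eq, hz2eq, h]
        have hπ : (0:ℝ) < Real.pi := Real.pi_pos
        rcases lt_or_gt_of_ne hargne with hlt | hlt
        · have h2π : z₂.arg < z₁.arg + 2*Real.pi := by
            have := Complex.arg_le_pi z₂
            have := Complex.neg_pi_lt_arg z₁
            linarith
          apply key_neq_same ha hb0 hb hH hs0 hs1 hlt h2π
          rw [← hz1eq, ← hz2eq]; exact heq
        · have h2π : z₁.arg < z₂.arg + 2*Real.pi := by
            have := Complex.arg_le_pi z₁
            have := Complex.neg_pi_lt_arg z₂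
            linarith
          apply key_neq_same ha hb0 hb hH hs0 hs1 hlt h2π
          rw [← hz1eq, ← hz2eq]; exact heq.symm
      · exact key_neq ha hb0 hb hH h₁ hlt heq.symm
    · -- convexity
      intro x hx y hy s t hs ht hst
      obtain ⟨z₁, hz₁, rfl⟩ := hx
      obtain ⟨z₂, hz₂, rfl⟩ := hy
      set r := (max ‖z₁‖ ‖z₂‖ + 1)/2 with hr
      have hm1 : ‖z₁‖ < 1 := mem_ball_zero_iff.1 hz₁
      have hm2 : ‖z₂‖ < 1 := mem_ball_zero_iff.1 hz₂
      have hmax : max ‖z₁‖ ‖z₂‖ < 1 := max_lt hm1 hm2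
      have hr0 : 0 < r := by
        have := le_max_left ‖z₁‖ ‖z₂‖
        have := norm_nonneg z₁
        rw [hr]; linarith
      have hr1 : r < 1 := by rw [hr]; linarith
      have hz₁r : z₁ ∈ ball (0:ℂ) r := by
        rw [mem_ball_zero_iff, hr]
        have := le_max_left ‖z₁‖ ‖z₂‖
        linarith
      have hz₂r : z₂ ∈ ball (0:ℂ) r := by
        rw [mem_ball_zero_iff, hr]
        have := le_max_right ‖z₁‖ ‖z₂‖
        linarith
      have hconv : Convex ℝ (H '' ball (0:ℂ) r) := by
        rw [image_eq_interior ha hb0 hb hH hr0 hr1]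
        exact (convex_Sbar a b H r).interior
      have hmem := hconv ⟨z₁, hz₁r, rfl⟩ ⟨z₂, hz₂r, rfl⟩ hs ht hst
      obtain ⟨w, hw, hweq⟩ := hmem
      exact ⟨w, mem_ball_zero_iff.2 ((mem_ball_zero_iff.1 hw).trans hr1), hweq⟩
end

section
/- For real a and θ, the harmonic mapping F_{a,a,θ} = H_a + conj(e^{iθ}(H_{a+1,a} - H_a)), where H_{a,b}(z) = ∫₀^z (1+t)^a/(1-t)^b dt and H_a = H_{a,a}, has the pre-Schwarzian derivative P_{F_{a,a,θ}}(z) = 2a/(1-z²) - conj(z)/(1-|z|²), and its pre-Schwarzian norm equals 2|a| + 1. -/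
open Complex Metric

lemma ballFacts (z : ℂ) (hz : z ∈ ball (0:ℂ) 1) :
    (1 + z) ∈ slitPlane ∧ (1 - z) ∈ slitPlane ∧ (1+z) ≠ 0 ∧ (1-z) ≠ 0 := by
  rw [mem_ball_zero_iff] at hz
  have h1 := abs_lt.1 (lt_of_le_of_lt (abs_re_le_norm z) hz)
  have h2 : 0 < (1+z).re := by simp only [add_re, one_re]; linarith [h1.1]
  have h3 : 0 < (1-z).re := by simp only [sub_re, one_re]; linarith [h1.2]
  exact ⟨Or.inl h2, Or.inl h3, fun h => by rw [h] at h2; simp at h2,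
    fun h => by rw [h] at h3; simp at h3⟩

lemma phi_deriv (a : ℝ) (z : ℂ) (hz : z ∈ ball (0:ℂ) 1) :
    HasDerivAt (fun w : ℂ => (1 + w) ^ (a : ℂ) / (1 - w) ^ (a : ℂ))
      (((1 + z) ^ (a : ℂ) / (1 - z) ^ (a : ℂ)) * (2 * a / (1 - z ^ 2))) z := by
  obtain ⟨s1, s2, n1, n2⟩ := ballFacts z hz
  have d1 : HasDerivAt (fun w : ℂ => (1 + w) ^ (a : ℂ))
      ((a : ℂ) * (1 + z) ^ ((a : ℂ) - 1) * 1) z :=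
    ((hasDerivAt_id z).const_add 1).cpow_const s1
  have d2 : HasDerivAt (fun w : ℂ => (1 - w) ^ (-(a : ℂ)))
      ((-(a : ℂ)) * (1 - z) ^ (-(a : ℂ) - 1) * (-1)) z :=
    ((hasDerivAt_id z).const_sub 1).cpow_const s2
  have key : HasDerivAt (fun w : ℂ => (1 + w) ^ (a : ℂ) * (1 - w) ^ (-(a : ℂ)))
      (((a : ℂ) * (1 + z) ^ ((a : ℂ) - 1) * 1) * (1 - z) ^ (-(a : ℂ))
        + (1 + z) ^ (a : ℂ) * ((-(a : ℂ)) * (1 - z) ^ (-(a : ℂ) - 1) * (-1))) z := d1.mul d2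
  have heq : (fun w : ℂ => (1 + w) ^ (a : ℂ) * (1 - w) ^ (-(a : ℂ)))
      = (fun w : ℂ => (1 + w) ^ (a : ℂ) / (1 - w) ^ (a : ℂ)) := by
    funext w
    rw [cpow_neg, div_eq_mul_inv]
  rw [heq] at key
  convert key using 1
  have e1 : (1 + z) ^ ((a : ℂ) - 1) = (1 + z) ^ (a : ℂ) / (1 + z) := by
    rw [cpow_sub _ _ n1, cpow_one]
  have e2 : (1 - z) ^ (-(a : ℂ) - 1) = (1 - z) ^ (-(a : ℂ)) / (1 - z) := by
    rw [cpow_sub _ _ n2, cpow_one]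
  rw [e1, e2, cpow_neg]
  have nz2 : (1 : ℂ) - z ^ 2 ≠ 0 := by
    have : (1:ℂ) - z^2 = (1+z)*(1-z) := by ring
    rw [this]; exact mul_ne_zero n1 n2
  have cn : ((1 - z) ^ (a:ℂ)) ≠ 0 := fun h => n2 ((cpow_eq_zero_iff _ _).1 h).1
  field_simp
  ring

lemma PH_formula (a θ : ℝ) (h g : ℂ → ℂ)
    (hh : ∀ z ∈ Metric.ball (0 : ℂ) 1,
        HasDerivAt h ((1 + z) ^ (a : ℂ) / (1 - z) ^ (a : ℂ)) z)
    (hg : ∀ z ∈ Metric.ball (0 : ℂ) 1,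
        HasDerivAt g (Complex.exp (θ * Complex.I) * z *
          ((1 + z) ^ (a : ℂ) / (1 - z) ^ (a : ℂ))) z)
    (z : ℂ) (hz : z ∈ ball (0:ℂ) 1) :
    PH h g z = 2 * (a : ℂ) / (1 - z ^ 2) -
      (starRingEnd ℂ) z / ((1 - ‖z‖ ^ 2 : ℝ) : ℂ) := by
  set φ : ℂ → ℂ := fun w => (1 + w) ^ (a : ℂ) / (1 - w) ^ (a : ℂ) with hφ
  set e : ℂ := Complex.exp (θ * Complex.I) with he
  have hmem : ball (0:ℂ) 1 ∈ nhds z := isOpen_ball.mem_nhds hz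
  have φne : ∀ w ∈ ball (0:ℂ) 1, φ w ≠ 0 := by
    intro w hw
    obtain ⟨_, _, n1, n2⟩ := ballFacts w hw
    exact div_ne_zero (fun hc => n1 ((cpow_eq_zero_iff _ _).1 hc).1)
      (fun hc => n2 ((cpow_eq_zero_iff _ _).1 hc).1)
  have hdh : ∀ w ∈ ball (0:ℂ) 1, deriv h w = φ w := fun w hw => (hh w hw).deriv
  have hdg : ∀ w ∈ ball (0:ℂ) 1, deriv g w = e * w * φ w := fun w hw => (hg w hw).deriv
  have hev : deriv h =ᶠ[nhds z] φ := Filter.eventually_of_mem hmem hdh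
  have hdd : deriv (deriv h) z = φ z * (2 * a / (1 - z ^ 2)) := by
    rw [hev.deriv_eq]
    exact (phi_deriv a z hz).deriv
  have hpd : pd h z = 2 * (a : ℂ) / (1 - z ^ 2) := by
    rw [pd, hdd, hdh z hz, mul_comm, mul_div_assoc, div_self (φne z hz), mul_one]
  have hdil : ∀ w ∈ ball (0:ℂ) 1, dil h g w = e * w := by
    intro w hw
    rw [dil, hdg w hw, hdh w hw, mul_div_assoc, div_self (φne w hw), mul_one]
  have hdilev : dil h g =ᶠ[nhds z] fun w => e * w := Filter.eventually_of_mem hmem hdil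
  have hddil : deriv (dil h g) z = e := by
    rw [hdilev.deriv_eq]
    simpa using ((hasDerivAt_id z).const_mul e).deriv
  have hee : (starRingEnd ℂ) e * e = 1 := by
    rw [he, ← Complex.exp_conj, ← Complex.exp_add]
    rw [show (starRingEnd ℂ) ((θ:ℂ) * Complex.I) + (θ:ℂ) * Complex.I = 0 by
      simp [Complex.conj_ofReal]]
    exact Complex.exp_zero
  have hne : ‖e * z‖ = ‖z‖ := by
    rw [norm_mul, he, Complex.norm_exp]
    simp
  rw [PH, hpd, hdil z hz, hddil, hne]
  congr 1
  rw [map_mul, mul_comm ((starRingEnd ℂ) e) _, mul_assoc, hee, mul_one]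


lemma upperBound (a : ℝ) (z : ℂ) (hz : z ∈ ball (0:ℂ) 1) (nz2 : (1:ℂ) - z^2 ≠ 0) :
    (1 - ‖z‖^2) * ‖2 * (a:ℂ)/(1-z^2) - (starRingEnd ℂ) z / ((1-‖z‖^2 : ℝ):ℂ)‖ ≤ 2*|a|+1 := by
  have hz1 : ‖z‖ < 1 := mem_ball_zero_iff.1 hz
  have ht0 : (0:ℝ) ≤ ‖z‖ := norm_nonneg z
  have h1t : (0:ℝ) < 1 - ‖z‖^2 := by nlinarith
  have hN : (0:ℝ) < ‖(1:ℂ) - z^2‖ := norm_pos_iff.2 nz2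
  have hb : 1 - ‖z‖^2 ≤ ‖(1:ℂ) - z^2‖ := by
    calc 1 - ‖z‖^2 = ‖(1:ℂ)‖ - ‖z^2‖ := by simp [norm_pow]
    _ ≤ ‖(1:ℂ) - z^2‖ := norm_sub_norm_le _ _
  have hA : ‖2 * (a:ℂ)/(1-z^2)‖ = 2*|a|/‖(1:ℂ)-z^2‖ := by
    rw [norm_div]
    congr 1
    rw [show 2 * (a:ℂ) = ((2*a : ℝ) : ℂ) by push_cast; ring, Complex.norm_real,
      Real.norm_eq_abs, abs_mul]; norm_num
  have hB : ‖(starRingEnd ℂ) z / ((1-‖z‖^2 : ℝ):ℂ)‖ = ‖z‖/(1-‖z‖^2) := by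
    rw [norm_div, RCLike.norm_conj, Complex.norm_real, Real.norm_eq_abs, abs_of_pos h1t]
  calc (1 - ‖z‖^2) * ‖2 * (a:ℂ)/(1-z^2) - (starRingEnd ℂ) z / ((1-‖z‖^2 : ℝ):ℂ)‖
      ≤ (1 - ‖z‖^2) * (‖2 * (a:ℂ)/(1-z^2)‖ + ‖(starRingEnd ℂ) z / ((1-‖z‖^2 : ℝ):ℂ)‖) :=
        mul_le_mul_of_nonneg_left (norm_sub_le _ _) h1t.le
    _ = (1 - ‖z‖^2) * (2*|a|/‖(1:ℂ)-z^2‖) + ‖z‖ := by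
        rw [hA, hB, mul_add]
        congr 1
        rw [mul_comm, div_mul_cancel₀ _ h1t.ne']
    _ ≤ ‖(1:ℂ)-z^2‖ * (2*|a|/‖(1:ℂ)-z^2‖) + ‖z‖ := by
        have : (0:ℝ) ≤ 2*|a|/‖(1:ℂ)-z^2‖ := by positivity
        nlinarith
    _ = 2*|a| + ‖z‖ := by rw [mul_comm, div_mul_cancel₀ _ hN.ne']
    _ ≤ 2*|a| + 1 := by linarith

lemma lowerWitness (a w : ℝ) (hw : w < 2*|a|+1) :
    ∃ z ∈ ball (0:ℂ) 1, w < (1 - ‖z‖^2) * ‖2 * (a:ℂ)/(1-z^2) - (starRingEnd ℂ) z / ((1-‖z‖^2 : ℝ):ℂ)‖ := by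
  set t : ℝ := max (1/2) ((w - 2*|a| + 1)/2) with htdef
  have ht1 : t < 1 := max_lt (by norm_num) (by linarith)
  have ht0 : (0:ℝ) < t := lt_of_lt_of_le (by norm_num) (le_max_left _ _)
  have htw : w - 2*|a| < t := by
    have := le_max_right (1/2) ((w - 2*|a| + 1)/2)
    linarith
  set u : ℝ := if 0 ≤ a then (-1:ℝ) else 1 with hudef
  have hu2 : u^2 = 1 := by rw [hudef]; split <;> norm_num
  have huabs : |u| = 1 := by rw [hudef]; split <;> norm_num
  set z : ℂ := ((t*u : ℝ) : ℂ) with hzdef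
  have hnz : ‖z‖ = t := by
    rw [hzdef, Complex.norm_real, Real.norm_eq_abs, abs_mul, huabs, mul_one, abs_of_pos ht0]
  have hzball : z ∈ ball (0:ℂ) 1 := by rw [mem_ball_zero_iff, hnz]; exact ht1
  have h1t : (0:ℝ) < 1 - t^2 := by nlinarith
  refine ⟨z, hzball, ?_⟩
  have hu2c : ((u:ℝ):ℂ)^2 = 1 := by rw [← Complex.ofReal_pow, hu2, Complex.ofReal_one]
  have hz2 : z^2 = ((t^2:ℝ):ℂ) := by rw [hzdef]; push_cast; rw [mul_pow, hu2c, mul_one]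
  have hne : (1:ℂ) - (t:ℂ)^2 ≠ 0 := by
    have h := Complex.ofReal_ne_zero.2 h1t.ne'
    push_cast at h
    exact h
  have hval : 2 * (a:ℂ)/(1-z^2) - (starRingEnd ℂ) z / ((1-‖z‖^2 : ℝ):ℂ)
      = (((2*a - t*u)/(1-t^2) : ℝ) : ℂ) := by
    rw [hnz, hz2, hzdef, Complex.conj_ofReal]
    push_cast
    field_simp
  rw [hval, hnz, Complex.norm_real, Real.norm_eq_abs, abs_div, abs_of_pos h1t,
    mul_comm, div_mul_cancel₀ _ h1t.ne']
  have habs : |2*a - t*u| = 2*|a| + t := by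
    rw [hudef]
    split
    · next ha =>
      rw [show 2*a - t*(-1) = 2*a + t by ring,
        _root_.abs_of_nonneg (by linarith : (0:ℝ) ≤ 2*a + t), _root_.abs_of_nonneg ha]
    · next ha =>
      push_neg at ha
      rw [show 2*a - t*1 = 2*a - t by ring,
        _root_.abs_of_neg (by linarith : 2*a - t < 0), _root_.abs_of_neg ha]
      ring
  rw [habs]
  linarith

theorem stmt9 (a θ : ℝ) (h g : ℂ → ℂ)
    (hh : ∀ z ∈ Metric.ball (0 : ℂ) 1,
        HasDerivAt h ((1 + z) ^ (a : ℂ) / (1 - z) ^ (a : ℂ)) z)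
    (hg : ∀ z ∈ Metric.ball (0 : ℂ) 1,
        HasDerivAt g (Complex.exp (θ * Complex.I) * z *
          ((1 + z) ^ (a : ℂ) / (1 - z) ^ (a : ℂ))) z) :
    (∀ z ∈ Metric.ball (0 : ℂ) 1,
        PH h g z = 2 * (a : ℂ) / (1 - z ^ 2) -
          (starRingEnd ℂ) z / ((1 - ‖z‖ ^ 2 : ℝ) : ℂ)) ∧
    pnorm (PH h g) = 2 * |a| + 1 := by
  have key := PH_formula a θ h g hh hg
  refine ⟨key, ?_⟩
  rw [pnorm]
  haveI : Nonempty (Metric.ball (0:ℂ) 1) := ⟨⟨0, by simp⟩⟩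
  apply ciSup_eq_of_forall_le_of_forall_lt_exists_gt
  · rintro ⟨z, hz⟩
    rw [key z hz]
    have nz2 : (1:ℂ) - z^2 ≠ 0 := by
      obtain ⟨_,_,n1,n2⟩ := ballFacts z hz
      rw [show (1:ℂ)-z^2 = (1+z)*(1-z) by ring]; exact mul_ne_zero n1 n2
    exact upperBound a z hz nz2
  · intro w hw
    obtain ⟨z, hz, hlt⟩ := lowerWitness a w hw
    exact ⟨⟨z, hz⟩, by rwa [key z hz]⟩
end

section
/- For each real a with -1 < a < 0 and each real θ, the harmonic mapping F_{a,a+1,θ} with analytic part H_{a,a+1} and dilatation e^{iθ}z has pre-Schwarzian norm exactly 1; i.e., sup_{z∈D} |((2a+1)(1-|z|²) + z - conj(z))/(1-z²)| = 1. -/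
open Complex Metric

theorem stmt10 (a : ℝ) (h1 : -1 < a) (h2 : a < 0) :
    (⨆ z : Metric.ball (0 : ℂ) 1,
        ‖((((2 * a + 1 : ℝ) : ℂ) * ((1 - ‖(z : ℂ)‖ ^ 2 : ℝ) : ℂ) + (z : ℂ) -
            (starRingEnd ℂ) (z : ℂ)) / (1 - (z : ℂ) ^ 2))‖) = 1 := by
  have hne : Nonempty (Metric.ball (0 : ℂ) 1) := ⟨⟨0, by simp⟩⟩
  set f : Metric.ball (0 : ℂ) 1 → ℝ := fun z =>
    ‖((((2 * a + 1 : ℝ) : ℂ) * ((1 - ‖(z : ℂ)‖ ^ 2 : ℝ) : ℂ) + (z : ℂ) -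
        (starRingEnd ℂ) (z : ℂ)) / (1 - (z : ℂ) ^ 2))‖ with hf
  have hre : ∀ (w : ℂ) (s : ℝ), (((2 * a + 1 : ℝ) : ℂ) * ((1 - s : ℝ) : ℂ) + w -
      (starRingEnd ℂ) w).re = (2 * a + 1) * (1 - s) := by
    intro w s
    simp only [Complex.sub_re, Complex.add_re, Complex.mul_re, Complex.ofReal_re,
      Complex.ofReal_im, Complex.conj_re]
    ring
  have him : ∀ (w : ℂ) (s : ℝ), (((2 * a + 1 : ℝ) : ℂ) * ((1 - s : ℝ) : ℂ) + w -
      (starRingEnd ℂ) w).im = 2 * w.im := by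
    intro w s
    simp only [Complex.sub_im, Complex.add_im, Complex.mul_im, Complex.ofReal_re,
      Complex.ofReal_im, Complex.conj_im]
    ring
  have hub : ∀ z : Metric.ball (0 : ℂ) 1, f z ≤ 1 := by
    intro ⟨z, hz⟩
    simp only [Metric.mem_ball, dist_zero_right] at hz
    have hn : ‖z‖ ^ 2 = z.re ^ 2 + z.im ^ 2 := by
      rw [Complex.sq_norm, Complex.normSq_apply]; ring
    have hzz : z.re ^ 2 + z.im ^ 2 < 1 := by
      rw [← hn]; nlinarith [norm_nonneg z]
    have hden : (1 : ℂ) - z ^ 2 ≠ 0 := by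
      intro h
      have h' : z ^ 2 = 1 := by linear_combination -h
      have : ‖z‖ ^ 2 = 1 := by rw [← norm_pow, h', norm_one]
      nlinarith [norm_nonneg z]
    rw [hf]
    simp only [norm_div]
    rw [div_le_one (norm_pos_iff.mpr hden)]
    generalize hgen : ‖z‖ ^ 2 = s
    rw [Complex.norm_def, Complex.norm_def]
    apply Real.sqrt_le_sqrt
    have h1z : ((1 : ℂ) - z ^ 2).re = 1 - z.re ^ 2 + z.im ^ 2 := by
      simp [pow_two, Complex.mul_re]; ring
    have h2z : ((1 : ℂ) - z ^ 2).im = -(2 * z.re * z.im) := by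
      simp [pow_two, Complex.mul_im]; ring
    rw [Complex.normSq_apply, Complex.normSq_apply, hre z s, him z s, h1z, h2z,
      ← hgen, hn]
    nlinarith [mul_nonneg (by nlinarith : (0:ℝ) ≤ -4 * (a * (a+1)))
      (sq_nonneg (1 - z.re ^ 2 - z.im ^ 2)), sq_nonneg z.re, sq_nonneg z.im]
  have hbdd : BddAbove (Set.range f) := by
    refine ⟨1, ?_⟩
    rintro x ⟨z, rfl⟩
    exact hub z
  refine le_antisymm (ciSup_le hub) ?_
  refine le_of_forall_pos_le_add ?_
  intro ε hε
  set δ : ℝ := min ε 1 with hδ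
  have hδ0 : 0 < δ := lt_min hε one_pos
  have hδ1 : δ ≤ 1 := min_le_right _ _
  have hδε : δ ≤ ε := min_le_left _ _
  set r : ℝ := 1 - δ / 2 with hr
  have hr0 : 0 < r := by simp only [hr]; linarith
  have hr1 : r < 1 := by simp only [hr]; linarith
  set z : ℂ := (r : ℂ) * Complex.I with hzdef
  have hznorm : ‖z‖ = r := by
    rw [hzdef, norm_mul, Complex.norm_I, mul_one, Complex.norm_real,
      Real.norm_of_nonneg hr0.le]
  have hzball : z ∈ Metric.ball (0 : ℂ) 1 := by
    simp only [mem_ball, dist_zero_right, hznorm]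
    exact hr1
  have hzim : z.im = r := by simp [hzdef]
  have hden : (1 : ℂ) - z ^ 2 = ((1 + r ^ 2 : ℝ) : ℂ) := by
    rw [hzdef]
    push_cast
    rw [mul_pow, Complex.I_sq]
    ring
  have hnormden : ‖(1 : ℂ) - z ^ 2‖ = 1 + r ^ 2 := by
    rw [hden, Complex.norm_real, Real.norm_of_nonneg (by positivity)]
  have himz : (((2 * a + 1 : ℝ) : ℂ) * ((1 - ‖z‖ ^ 2 : ℝ) : ℂ) + z -
      (starRingEnd ℂ) z).im = 2 * r := by rw [him z _, hzim]
  have hval : 2 * r / (1 + r ^ 2) ≤ f ⟨z, hzball⟩ := by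
    rw [hf]
    simp only [norm_div, hnormden]
    gcongr
    calc 2 * r = |(((2 * a + 1 : ℝ) : ℂ) * ((1 - ‖z‖ ^ 2 : ℝ) : ℂ) + z -
        (starRingEnd ℂ) z).im| := by rw [himz, abs_of_pos (by positivity)]
      _ ≤ _ := by
          exact Complex.abs_im_le_norm _
  have hlow : 1 - ε ≤ 2 * r / (1 + r ^ 2) := by
    rw [le_div_iff₀ (by positivity)]
    have hrδ : r = 1 - δ / 2 := hr
    have hδsq : δ ^ 2 ≤ ε := by nlinarith [mul_le_mul hδε hδ1 hδ0.le hε.le]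
    have h1r : (1 - r) ^ 2 = δ ^ 2 / 4 := by rw [hrδ]; ring
    clear_value z
    clear_value r
    clear_value δ
    nlinarith [mul_nonneg hε.le (sq_nonneg r)]
  calc (1 : ℝ) ≤ 2 * r / (1 + r ^ 2) + ε := by linarith
    _ ≤ f ⟨z, hzball⟩ + ε := by linarith
    _ ≤ (⨆ w, f w) + ε := by
        have := le_ciSup hbdd (⟨z, hzball⟩ : Metric.ball (0 : ℂ) 1)
        linarith
end

section
/- A normalized sense-preserving harmonic mapping f = h + conj(g) in D (h(0)=0, h'(0)=1, g(0)=0) satisfies ||P_f|| ≤ λ if and only if for each pair of points z, z₀ in D, |log J_f(z) - log J_f(z₀)| ≤ λ·d_h(z,z₀), where J_f = |h'|²-|g'|² > 0 is the Jacobian and d_h(z,z₀) = 2·arctanh|(z-z₀)/(1-conj(z₀)z)| is the hyperbolic distance. -/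
open Complex Metric

lemma norm_sq_re_im (z : ℂ) : ‖z‖^2 = z.re*z.re + z.im*z.im := by
  rw [← Complex.normSq_apply, ← Complex.sq_norm]

lemma hasDerivAt_norm_sq_comp {F : ℝ → ℂ} {d : ℂ} {t : ℝ} (hF : HasDerivAt F d t) :
    HasDerivAt (fun s => ‖F s‖^2) (2 * ((starRingEnd ℂ) (F t) * d).re) t := by
  have hre : HasDerivAt (fun s => (F s).re) d.re t :=
    Complex.reCLM.hasFDerivAt.comp_hasDerivAt t hF
  have him : HasDerivAt (fun s => (F s).im) d.im t :=
    Complex.imCLM.hasFDerivAt.comp_hasDerivAt t hF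
  have := (hre.mul hre).add (him.mul him)
  have h2 : HasDerivAt (fun s => (F s).re*(F s).re + (F s).im*(F s).im)
      (2 * ((starRingEnd ℂ) (F t) * d).re) t := by
    refine this.congr_deriv ?_; symm
    simp [Complex.mul_re]
    ring
  simpa only [norm_sq_re_im] using h2

lemma PH_mul_J {h g : ℂ → ℂ} {z : ℂ}
    (hH : DifferentiableAt ℂ (deriv h) z) (hG : DifferentiableAt ℂ (deriv g) z)
    (hlt : ‖deriv g z‖ < ‖deriv h z‖) :
    PH h g z * (((‖deriv h z‖^2 - ‖deriv g z‖^2 : ℝ)) : ℂ) =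
      (starRingEnd ℂ) (deriv h z) * deriv (deriv h) z
        - (starRingEnd ℂ) (deriv g z) * deriv (deriv g) z := by
  have hA : deriv h z ≠ 0 := by
    rw [← norm_pos_iff]; exact (norm_nonneg _).trans_lt hlt
  set A := deriv h z with hAdef
  set B := deriv g z with hBdef
  have hdd : deriv (dil h g) z
      = (deriv (deriv g) z * A - B * deriv (deriv h) z) / A^2 := by
    unfold dil
    exact deriv_div hG hH hA
  have hdil : dil h g z = B / A := rfl
  have hApos : (0:ℝ) < ‖A‖^2 := by
    have : (0:ℝ) < ‖A‖ := (norm_nonneg _).trans_lt hlt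
    positivity
  have hJpos : (0:ℝ) < ‖A‖^2 - ‖B‖^2 := by
    nlinarith [norm_nonneg A, norm_nonneg B]
  have hJne : ((‖A‖^2 - ‖B‖^2 : ℝ) : ℂ) ≠ 0 := by
    exact_mod_cast ne_of_gt hJpos
  have e1r : (1 - ‖dil h g z‖^2 : ℝ) = (‖A‖^2 - ‖B‖^2) / ‖A‖^2 := by
    rw [hdil, norm_div, div_pow, one_sub_div (ne_of_gt hApos)]
  have e1 : ((1 - ‖dil h g z‖^2 : ℝ) : ℂ)
      = ((‖A‖^2 - ‖B‖^2 : ℝ) : ℂ) / ((‖A‖^2 : ℝ) : ℂ) := by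
    rw [e1r, Complex.ofReal_div]
  have hcA : ((‖A‖ : ℂ))^2 = (starRingEnd ℂ) A * A := by
    rw [mul_comm]; exact_mod_cast (Complex.mul_conj' A).symm
  have hcB : ((‖B‖ : ℂ))^2 = (starRingEnd ℂ) B * B := by
    rw [mul_comm]; exact_mod_cast (Complex.mul_conj' B).symm
  have hcAne : (starRingEnd ℂ) A ≠ 0 := by simpa using hA
  have hprod : (starRingEnd ℂ) A * A ≠ 0 := mul_ne_zero hcAne hA
  have hdiffne : (starRingEnd ℂ) A * A - (starRingEnd ℂ) B * B ≠ 0 := by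
    rw [← hcA, ← hcB]
    intro hc
    apply hJne
    push_cast
    exact hc
  unfold PH pd
  rw [← hAdef]
  rw [hdd, e1, hdil, map_div₀]
  push_cast
  rw [hcA, hcB]
  have hdiffne' : A * (starRingEnd ℂ) A - (starRingEnd ℂ) B * B ≠ 0 := by rwa [mul_comm A]
  field_simp [hA, hcAne, hdiffne, hdiffne']
  ring

lemma Jpos_of_lt {a b : ℂ} (hlt : ‖b‖ < ‖a‖) : (0:ℝ) < ‖a‖^2 - ‖b‖^2 := by
  nlinarith [norm_nonneg a, norm_nonneg b]

lemma hasDerivAt_logJ {h g : ℂ → ℂ}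
    (hh : DifferentiableOn ℂ h (ball (0:ℂ) 1)) (hg : DifferentiableOn ℂ g (ball (0:ℂ) 1))
    (hlt : ∀ z ∈ ball (0:ℂ) 1, ‖deriv g z‖ < ‖deriv h z‖)
    {c : ℝ → ℂ} {c' : ℂ} {t : ℝ} (hc : HasDerivAt c c' t) (hct : c t ∈ ball (0:ℂ) 1) :
    HasDerivAt (fun s => Real.log (‖deriv h (c s)‖^2 - ‖deriv g (c s)‖^2))
      (2 * (PH h g (c t) * c').re) t := by
  have hO : IsOpen (ball (0:ℂ) 1) := isOpen_ball
  have hH1 : DifferentiableAt ℂ (deriv h) (c t) :=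
    (((hh.analyticOnNhd hO).deriv) _ hct).differentiableAt
  have hG1 : DifferentiableAt ℂ (deriv g) (c t) :=
    (((hg.analyticOnNhd hO).deriv) _ hct).differentiableAt
  have hHc : HasDerivAt (fun s => deriv h (c s)) (deriv (deriv h) (c t) * c') t := by
    have := (hH1.hasDerivAt.hasFDerivAt.restrictScalars ℝ).comp_hasDerivAt t hc
    refine this.congr_deriv ?_; symm
    simp [mul_comm]
  have hGc : HasDerivAt (fun s => deriv g (c s)) (deriv (deriv g) (c t) * c') t := by
    have := (hG1.hasDerivAt.hasFDerivAt.restrictScalars ℝ).comp_hasDerivAt t hc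
    refine this.congr_deriv ?_; symm
    simp [mul_comm]
  have hJ : HasDerivAt (fun s => ‖deriv h (c s)‖^2 - ‖deriv g (c s)‖^2)
      (2 * ((starRingEnd ℂ) (deriv h (c t)) * (deriv (deriv h) (c t) * c')).re
        - 2 * ((starRingEnd ℂ) (deriv g (c t)) * (deriv (deriv g) (c t) * c')).re) t :=
    (hasDerivAt_norm_sq_comp hHc).sub (hasDerivAt_norm_sq_comp hGc)
  have hJpos : (0:ℝ) < ‖deriv h (c t)‖^2 - ‖deriv g (c t)‖^2 := Jpos_of_lt (hlt _ hct)
  have hlog := hJ.log (ne_of_gt hJpos)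
  have key := PH_mul_J hH1 hG1 (hlt _ hct)
  have e3 : (starRingEnd ℂ) (deriv h (c t)) * (deriv (deriv h) (c t) * c')
      - (starRingEnd ℂ) (deriv g (c t)) * (deriv (deriv g) (c t) * c')
      = (PH h g (c t) * c') * (((‖deriv h (c t)‖^2 - ‖deriv g (c t)‖^2 : ℝ)) : ℂ) := by
    linear_combination -c' * key
  have hre : ∀ (wc : ℂ) (rr : ℝ), (wc * (rr:ℂ)).re = wc.re * rr := fun wc rr => by
    simp [Complex.mul_re]
  have e4 : ((starRingEnd ℂ) (deriv h (c t)) * (deriv (deriv h) (c t) * c')).re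
      - ((starRingEnd ℂ) (deriv g (c t)) * (deriv (deriv g) (c t) * c')).re
      = (PH h g (c t) * c').re * (‖deriv h (c t)‖^2 - ‖deriv g (c t)‖^2) := by
    have := congrArg Complex.re e3
    rwa [Complex.sub_re, hre] at this
  refine hlog.congr_deriv ?_; symm
  rw [eq_div_iff (ne_of_gt hJpos)]
  linarith [e4]

lemma mob_key (a z : ℂ) :
    ‖1 - (starRingEnd ℂ) a * z‖^2 - ‖z - a‖^2 = (1 - ‖a‖^2) * (1 - ‖z‖^2) := by
  have e : ∀ w : ℂ, ‖w‖^2 = Complex.normSq w := fun w => by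
    rw [← Complex.sq_norm]
  simp only [e]
  simp [Complex.normSq_apply, Complex.sub_re, Complex.sub_im, Complex.mul_re, Complex.mul_im]
  ring

lemma mob_lt {a z : ℂ} (ha : ‖a‖ < 1) (hz : ‖z‖ < 1) :
    ‖z - a‖ < ‖1 - (starRingEnd ℂ) a * z‖ := by
  have hk := mob_key a z
  have ha2 : ‖a‖^2 < 1 := by nlinarith [norm_nonneg a]
  have hz2 : ‖z‖^2 < 1 := by nlinarith [norm_nonneg z]
  have h1 : 0 < (1-‖a‖^2)*(1-‖z‖^2) := mul_pos (by linarith) (by linarith)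
  nlinarith [norm_nonneg (z - a), norm_nonneg (1 - (starRingEnd ℂ) a * z), hk, h1]

lemma mob_ne {a z : ℂ} (ha : ‖a‖ < 1) (hz : ‖z‖ < 1) :
    1 - (starRingEnd ℂ) a * z ≠ 0 := by
  rw [← norm_pos_iff]
  exact (norm_nonneg _).trans_lt (mob_lt ha hz)

lemma mob_ne' {a ζ : ℂ} (ha : ‖a‖ < 1) (hζ : ‖ζ‖ < 1) :
    1 + (starRingEnd ℂ) a * ζ ≠ 0 := by
  have := mob_ne (a := -a) (z := ζ) (by simpa) hζ
  simpa [sub_neg_eq_add] using this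

lemma mob_lt' {a ζ : ℂ} (ha : ‖a‖ < 1) (hζ : ‖ζ‖ < 1) :
    ‖ζ + a‖ < ‖1 + (starRingEnd ℂ) a * ζ‖ := by
  have := mob_lt (a := -a) (z := ζ) (by simpa) hζ
  simpa [sub_neg_eq_add] using this

lemma mob_key' (a ζ : ℂ) :
    ‖1 + (starRingEnd ℂ) a * ζ‖^2 - ‖ζ + a‖^2 = (1 - ‖a‖^2) * (1 - ‖ζ‖^2) := by
  have := mob_key (-a) ζ
  simpa [sub_neg_eq_add] using this

lemma forward {h g : ℂ → ℂ}
    (hh : DifferentiableOn ℂ h (ball (0:ℂ) 1)) (hg : DifferentiableOn ℂ g (ball (0:ℂ) 1))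
    (hlt : ∀ z ∈ ball (0:ℂ) 1, ‖deriv g z‖ < ‖deriv h z‖) {lam : ℝ}
    (hb : ∀ z ∈ ball (0:ℂ) 1, (1 - ‖z‖^2) * ‖PH h g z‖ ≤ lam)
    {z a : ℂ} (hz : ‖z‖ < 1) (ha : ‖a‖ < 1) :
    |Real.log (‖deriv h z‖^2 - ‖deriv g z‖^2) - Real.log (‖deriv h a‖^2 - ‖deriv g a‖^2)|
      ≤ lam * Real.log ((1 + ‖(z - a)/(1 - (starRingEnd ℂ) a * z)‖)
          / (1 - ‖(z - a)/(1 - (starRingEnd ℂ) a * z)‖)) := by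
  have hdz : 1 - (starRingEnd ℂ) a * z ≠ 0 := mob_ne ha hz
  set w : ℂ := (z - a)/(1 - (starRingEnd ℂ) a * z) with hw
  set r : ℝ := ‖w‖ with hrdef
  have hr0 : 0 ≤ r := norm_nonneg w
  have hr1 : r < 1 := by
    rw [hrdef, hw, norm_div]
    rw [div_lt_one ((norm_nonneg _).trans_lt (mob_lt ha hz))]
    exact mob_lt ha hz
  -- the geodesic
  set den : ℝ → ℂ := fun t => 1 + (starRingEnd ℂ) a * ((t:ℂ)*w) with hden_def
  set γ : ℝ → ℂ := fun t => ((t:ℂ)*w + a) / den t with hγdef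
  have htw : ∀ t ∈ Set.Icc (0:ℝ) 1, ‖(t:ℂ)*w‖ = t*r := by
    intro t ht
    rw [norm_mul, Complex.norm_real, Real.norm_eq_abs, _root_.abs_of_nonneg ht.1]
  have htw1 : ∀ t ∈ Set.Icc (0:ℝ) 1, ‖(t:ℂ)*w‖ < 1 := by
    intro t ht
    rw [htw t ht]
    calc t*r ≤ 1*r := by apply mul_le_mul_of_nonneg_right ht.2 hr0
    _ = r := one_mul r
    _ < 1 := hr1
  have hden : ∀ t ∈ Set.Icc (0:ℝ) 1, den t ≠ 0 := fun t ht =>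
    mob_ne' ha (htw1 t ht)
  have hmem : ∀ t ∈ Set.Icc (0:ℝ) 1, γ t ∈ ball (0:ℂ) 1 := by
    intro t ht
    rw [mem_ball_zero_iff, hγdef]
    simp only [norm_div]
    rw [div_lt_one ((norm_nonneg _).trans_lt (mob_lt' ha (htw1 t ht)))]
    exact mob_lt' ha (htw1 t ht)
  have hcaa : (starRingEnd ℂ) a * a = ((‖a‖^2 : ℝ) : ℂ) := by
    rw [mul_comm]; exact_mod_cast Complex.mul_conj' a
  -- derivative of γ
  have hγd : ∀ t ∈ Set.Icc (0:ℝ) 1,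
      HasDerivAt γ (w * (1 - (starRingEnd ℂ) a * a) / (den t)^2) t := by
    intro t ht
    have hN : HasDerivAt (fun s:ℝ => (s:ℂ)*w + a) w t := by
      have := (Complex.ofRealCLM.hasDerivAt (x := t)).mul_const w
      simpa using this.add_const a
    have hD : HasDerivAt (fun s:ℝ => den s) ((starRingEnd ℂ) a * w) t := by
      have := ((Complex.ofRealCLM.hasDerivAt (x := t)).mul_const w).const_mul
        ((starRingEnd ℂ) a)
      simpa [hden_def] using this.const_add 1
    have := hN.div hD (hden t ht)
    refine this.congr_deriv ?_; symm
    rw [div_eq_div_iff (pow_ne_zero 2 (hden t ht)) (pow_ne_zero 2 (hden t ht))]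
    simp only [hden_def]
    ring
  -- speed identity
  have hspeed : ∀ t ∈ Set.Icc (0:ℝ) 1,
      ‖w * (1 - (starRingEnd ℂ) a * a) / (den t)^2‖
        = (1 - ‖γ t‖^2) * (r / (1 - (t*r)^2)) := by
    intro t ht
    have h1 : (1:ℝ) - (t*r)^2 > 0 := by
      have := htw1 t ht; rw [htw t ht] at this
      nlinarith [mul_nonneg ht.1 hr0]
    have hd2 : (0:ℝ) < ‖den t‖^2 := by
      have : den t ≠ 0 := hden t ht
      have : ‖den t‖ > 0 := norm_pos_iff.mpr this
      positivity
    have hγnorm : 1 - ‖γ t‖^2 = (1 - ‖a‖^2) * (1 - (t*r)^2) / ‖den t‖^2 := by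
      have hk := mob_key' a ((t:ℂ)*w)
      rw [htw t ht] at hk
      have : ‖γ t‖^2 = ‖(t:ℂ)*w + a‖^2 / ‖den t‖^2 := by
        rw [hγdef]; simp only [norm_div, div_pow]
      rw [this, ← hk, sub_div, div_self (ne_of_gt hd2)]
    have hnum : ‖w * (1 - (starRingEnd ℂ) a * a)‖ = r * (1 - ‖a‖^2) := by
      rw [norm_mul, hcaa]
      have : (1:ℂ) - ((‖a‖^2:ℝ):ℂ) = ((1 - ‖a‖^2 : ℝ):ℂ) := by push_cast; ring
      rw [this, Complex.norm_real, Real.norm_eq_abs,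
        _root_.abs_of_nonneg (by nlinarith [norm_nonneg a] : (0:ℝ) ≤ 1 - ‖a‖^2)]
    have hDne : (‖den t‖^2 : ℝ) ≠ 0 := ne_of_gt hd2
    have h1ne : (1:ℝ) - (t*r)^2 ≠ 0 := ne_of_gt h1
    rw [norm_div, hnum, norm_pow, hγnorm, div_mul_div_comm,
      div_eq_div_iff hDne (mul_ne_zero hDne h1ne)]
    ring
  -- the two auxiliary functions
  set F : ℝ → ℝ := fun t => Real.log (‖deriv h (γ t)‖^2 - ‖deriv g (γ t)‖^2) with hF
  set φ : ℝ → ℝ := fun t => lam * (Real.log (1 + t*r) - Real.log (1 - t*r)) with hφ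
  have hpos1 : ∀ t ∈ Set.Icc (0:ℝ) 1, (0:ℝ) < 1 + t*r := by
    intro t ht; nlinarith [mul_nonneg ht.1 hr0]
  have hpos2 : ∀ t ∈ Set.Icc (0:ℝ) 1, (0:ℝ) < 1 - t*r := by
    intro t ht
    have h2 : t*r ≤ 1*r := mul_le_mul_of_nonneg_right ht.2 hr0
    rw [one_mul] at h2
    linarith [hr1]
  have hφd : ∀ t ∈ Set.Icc (0:ℝ) 1,
      HasDerivAt φ (lam * (r/(1+t*r) + r/(1-t*r))) t := by
    intro t ht
    have d1 : HasDerivAt (fun s:ℝ => 1 + s*r) r t := by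
      simpa using ((hasDerivAt_id t).mul_const r).const_add 1
    have d2 : HasDerivAt (fun s:ℝ => 1 - s*r) (-r) t := by
      simpa using ((hasDerivAt_id t).mul_const r).const_sub 1
    have l1 := d1.log (ne_of_gt (hpos1 t ht))
    have l2 := d2.log (ne_of_gt (hpos2 t ht))
    have := (l1.sub l2).const_mul lam
    refine this.congr_deriv ?_; symm
    rw [neg_div]
    ring
  have hFd : ∀ t ∈ Set.Icc (0:ℝ) 1,
      HasDerivAt F (2 * (PH h g (γ t) * (w * (1 - (starRingEnd ℂ) a * a) / (den t)^2)).re) t :=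
    fun t ht => hasDerivAt_logJ hh hg hlt (hγd t ht) (hmem t ht)
  have hbound : ∀ t ∈ Set.Icc (0:ℝ) 1,
      |2 * (PH h g (γ t) * (w * (1 - (starRingEnd ℂ) a * a) / (den t)^2)).re|
        ≤ lam * (r/(1+t*r) + r/(1-t*r)) := by
    intro t ht
    have h1 : (0:ℝ) < 1 - (t*r)^2 := by nlinarith [hpos1 t ht, hpos2 t ht]
    have e1 : lam * (r/(1+t*r) + r/(1-t*r)) = 2*(lam*(r/(1-(t*r)^2))) := by
      rw [div_add_div _ _ (ne_of_gt (hpos1 t ht)) (ne_of_gt (hpos2 t ht))]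
      have hd : (1+t*r)*(1-t*r) = 1-(t*r)^2 := by ring
      rw [hd]
      have hn : r*(1-t*r)+(1+t*r)*r = 2*r := by ring
      rw [hn, mul_div_assoc]
      ring
    rw [e1]
    set V : ℂ := w * (1 - (starRingEnd ℂ) a * a) / (den t)^2 with hV
    have hv : ‖V‖ = (1 - ‖γ t‖^2) * (r/(1-(t*r)^2)) := hspeed t ht
    have hPH := hb (γ t) (hmem t ht)
    have hnn : (0:ℝ) ≤ r/(1-(t*r)^2) := div_nonneg hr0 (le_of_lt h1)
    calc |2 * (PH h g (γ t) * V).re|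
        = 2 * |(PH h g (γ t) * V).re| := by rw [abs_mul]; norm_num
      _ ≤ 2 * ‖PH h g (γ t) * V‖ := by
          have h2 := Complex.abs_re_le_norm (PH h g (γ t) * V)
          linarith
      _ = 2 * (‖PH h g (γ t)‖ * ((1 - ‖γ t‖^2) * (r/(1-(t*r)^2)))) := by
          rw [norm_mul, hv]
      _ ≤ 2 * (lam * (r/(1-(t*r)^2))) := by
          have h3 : ‖PH h g (γ t)‖ * (1 - ‖γ t‖^2) ≤ lam := by
            rw [mul_comm]; exact hPH
          have h4 : ‖PH h g (γ t)‖ * ((1 - ‖γ t‖^2) * (r/(1-(t*r)^2)))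
              ≤ lam * (r/(1-(t*r)^2)) := by
            rw [← mul_assoc]
            exact mul_le_mul_of_nonneg_right h3 hnn
          linarith
  -- monotonicity argument
  have key : ∀ (ε : ℝ), ε = 1 ∨ ε = -1 → ε * (F 1 - F 0) ≤ φ 1 - φ 0 := by
    intro ε hε
    have hmono : MonotoneOn (fun t => φ t - ε * F t) (Set.Icc (0:ℝ) 1) := by
      apply monotoneOn_of_deriv_nonneg (convex_Icc 0 1)
      · intro t ht
        exact ((hφd t ht).sub ((hFd t ht).const_mul ε)).continuousAt.continuousWithinAt
      · intro t ht
        rw [interior_Icc] at ht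
        have ht' : t ∈ Set.Icc (0:ℝ) 1 := ⟨le_of_lt ht.1, le_of_lt ht.2⟩
        exact ((hφd t ht').sub ((hFd t ht').const_mul ε)).differentiableAt.differentiableWithinAt
      · intro t ht
        rw [interior_Icc] at ht
        have ht' : t ∈ Set.Icc (0:ℝ) 1 := ⟨le_of_lt ht.1, le_of_lt ht.2⟩
        rw [HasDerivAt.deriv (f := fun t => φ t - ε * F t) ((hφd t ht').sub ((hFd t ht').const_mul ε))]
        have hbd := hbound t ht'
        have h5 : ε * (2 * (PH h g (γ t) * (w * (1 - (starRingEnd ℂ) a * a) / (den t)^2)).re)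
            ≤ |2 * (PH h g (γ t) * (w * (1 - (starRingEnd ℂ) a * a) / (den t)^2)).re| := by
          rcases hε with hE | hE <;> rw [hE]
          · rw [one_mul]; exact le_abs_self _
          · rw [neg_one_mul]; exact neg_le_abs _
        linarith
    have := hmono (Set.left_mem_Icc.mpr zero_le_one) (Set.right_mem_Icc.mpr zero_le_one)
      zero_le_one
    simp only at this
    nlinarith [this]
  -- endpoints
  have eγ0 : γ 0 = a := by
    rw [hγdef, hden_def]
    push_cast
    simp
  have eγ1 : γ 1 = z := by
    have hden1 : den 1 ≠ 0 := hden 1 (Set.right_mem_Icc.mpr zero_le_one)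
    have hwz : w * (1 - (starRingEnd ℂ) a * z) = z - a := by
      rw [hw]
      field_simp
      rw [mul_comm z]; exact mul_div_cancel_right₀ _ hdz
    rw [hγdef]
    simp only
    rw [div_eq_iff hden1, hden_def]
    push_cast
    linear_combination hwz
  have eφ0 : φ 0 = 0 := by
    rw [hφ]; simp
  have eφ1 : φ 1 = lam * (Real.log (1+r) - Real.log (1-r)) := by
    rw [hφ]; simp
  have eF0 : F 0 = Real.log (‖deriv h a‖^2 - ‖deriv g a‖^2) := by
    rw [hF]; simp only; rw [eγ0]
  have eF1 : F 1 = Real.log (‖deriv h z‖^2 - ‖deriv g z‖^2) := by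
    rw [hF]; simp only; rw [eγ1]
  have hlogdiv : Real.log ((1+r)/(1-r)) = Real.log (1+r) - Real.log (1-r) :=
    Real.log_div (by positivity) (by linarith)
  have k1 := key 1 (Or.inl rfl)
  have k2 := key (-1) (Or.inr rfl)
  rw [← eF1, ← eF0, hlogdiv]
  rw [abs_le]
  constructor
  · nlinarith [k2, eφ0, eφ1]
  · nlinarith [k1, eφ0, eφ1]

lemma backward {h g : ℂ → ℂ}
    (hh : DifferentiableOn ℂ h (ball (0:ℂ) 1)) (hg : DifferentiableOn ℂ g (ball (0:ℂ) 1))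
    (hlt : ∀ z ∈ ball (0:ℂ) 1, ‖deriv g z‖ < ‖deriv h z‖) {lam : ℝ} (hlam : 0 ≤ lam)
    (hyp : ∀ z ∈ ball (0:ℂ) 1, ∀ z₀ ∈ ball (0:ℂ) 1,
      |Real.log (‖deriv h z‖^2 - ‖deriv g z‖^2) -
          Real.log (‖deriv h z₀‖^2 - ‖deriv g z₀‖^2)| ≤
        lam * Real.log ((1 + ‖(z - z₀) / (1 - (starRingEnd ℂ) z₀ * z)‖) /
          (1 - ‖(z - z₀) / (1 - (starRingEnd ℂ) z₀ * z)‖)))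
    {a : ℂ} (ha : a ∈ ball (0:ℂ) 1) :
    (1 - ‖a‖^2) * ‖PH h g a‖ ≤ lam := by
  have haD : ‖a‖ < 1 := mem_ball_zero_iff.mp ha
  have ha2 : (0:ℝ) < 1 - ‖a‖^2 := by nlinarith [norm_nonneg a]
  set P : ℂ := PH h g a with hP
  by_cases hP0 : P = 0
  · rw [hP0]
    simpa using hlam
  -- direction of steepest ascent
  have hPn : (0:ℝ) < ‖P‖ := norm_pos_iff.mpr hP0
  have hPnC : ((‖P‖ : ℝ) : ℂ) ≠ 0 := by exact_mod_cast ne_of_gt hPn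
  set v : ℂ := (starRingEnd ℂ) P / ((‖P‖ : ℝ) : ℂ) with hv
  have hvnorm : ‖v‖ = 1 := by
    rw [hv, norm_div, RCLike.norm_conj, Complex.norm_real, Real.norm_eq_abs,
      _root_.abs_of_nonneg (le_of_lt hPn), div_self (ne_of_gt hPn)]
  have hPv : P * v = ((‖P‖ : ℝ) : ℂ) := by
    rw [hv, mul_div_assoc']
    rw [Complex.mul_conj']
    rw [sq]
    rw [mul_div_assoc, div_self hPnC, mul_one]
  -- the ray
  set c : ℝ → ℂ := fun t => a + (t:ℂ) * v with hc
  have hcd : ∀ t : ℝ, HasDerivAt c v t := by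
    intro t
    have := (Complex.ofRealCLM.hasDerivAt (x := t)).mul_const v
    simpa [hc] using this.const_add a
  have hc0 : c 0 = a := by simp [hc]
  have hFd : HasDerivAt (fun t => Real.log (‖deriv h (c t)‖^2 - ‖deriv g (c t)‖^2))
      (2 * ‖P‖) 0 := by
    have := hasDerivAt_logJ hh hg hlt (hcd 0) (by rw [hc0]; exact ha)
    rw [hc0, ← hP, hPv] at this
    simpa using this
  set F : ℝ → ℝ := fun t => Real.log (‖deriv h (c t)‖^2 - ‖deriv g (c t)‖^2) with hF
  -- the hyperbolic ratio
  set d : ℝ → ℂ := fun t => 1 - (starRingEnd ℂ) a * c t with hd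
  have hd0 : d 0 = ((1 - ‖a‖^2 : ℝ) : ℂ) := by
    rw [hd]
    simp only [hc0]
    have : (starRingEnd ℂ) a * a = ((‖a‖^2 : ℝ) : ℂ) := by
      rw [mul_comm]; exact_mod_cast Complex.mul_conj' a
    rw [this]
    push_cast
    ring
  have hd0ne : d 0 ≠ 0 := by
    rw [hd0]
    exact_mod_cast ne_of_gt ha2
  have hdcont : Continuous d := by
    rw [hd, hc]
    exact continuous_const.sub (continuous_const.mul
      (continuous_const.add (Complex.continuous_ofReal.mul continuous_const)))
  set ρ : ℝ → ℝ := fun t => ‖(c t - a) / (1 - (starRingEnd ℂ) a * c t)‖ with hρ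
  have hρ_eq : ∀ t : ℝ, ρ t = ‖(t:ℂ) * v / d t‖ := by
    intro t
    rw [hρ, hd, hc]
    simp only [add_sub_cancel_left]
  have hρcont : Filter.Tendsto ρ (nhdsWithin 0 (Set.Ioi 0)) (nhds 0) := by
    have h1 : Filter.Tendsto (fun t : ℝ => ‖(t:ℂ) * v / d t‖) (nhds 0) (nhds ‖(0:ℂ) * v / d 0‖) := by
      apply Filter.Tendsto.norm
      apply Filter.Tendsto.div
      · exact (Complex.continuous_ofReal.mul continuous_const).tendsto' 0 _ (by simp)
      · exact hdcont.continuousAt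
      · exact hd0ne
    rw [show ‖(0:ℂ) * v / d 0‖ = 0 by simp] at h1
    exact Filter.Tendsto.congr (fun t => (hρ_eq t).symm)
      (h1.mono_left (nhdsWithin_le_nhds (s := Set.Ioi 0)))
  -- limit of the ratio m
  have hm : Filter.Tendsto (fun t : ℝ => ‖v / d t‖) (nhdsWithin 0 (Set.Ioi 0))
      (nhds (1 / (1 - ‖a‖^2))) := by
    have h1 : Filter.Tendsto (fun t : ℝ => ‖v / d t‖) (nhds 0) (nhds ‖v / d 0‖) :=
      (Filter.Tendsto.div tendsto_const_nhds (hdcont.tendsto 0) hd0ne).norm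
    have h2 : ‖v / d 0‖ = 1 / (1 - ‖a‖^2) := by
      rw [norm_div, hvnorm, hd0, Complex.norm_real, Real.norm_eq_abs,
        _root_.abs_of_nonneg (le_of_lt ha2)]
    rw [h2] at h1
    exact h1.mono_left (nhdsWithin_le_nhds (s := Set.Ioi 0))
  -- the slope function of log((1+x)/(1-x)) at 0
  set q : ℝ → ℝ := fun x => (Real.log (1+x) - Real.log (1-x))/x with hq
  have hqlim : Filter.Tendsto q (nhdsWithin 0 {(0:ℝ)}ᶜ) (nhds 2) := by
    have hder : HasDerivAt (fun x : ℝ => Real.log (1+x) - Real.log (1-x)) 2 0 := by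
      have d1 : HasDerivAt (fun x : ℝ => 1 + x) 1 0 := by
        simpa using (hasDerivAt_id (0:ℝ)).const_add 1
      have d2 : HasDerivAt (fun x : ℝ => 1 - x) (-1) 0 := by
        simpa using (hasDerivAt_id (0:ℝ)).const_sub 1
      have l1 := (d1.log (by norm_num))
      have l2 := (d2.log (by norm_num))
      have l3 := l1.sub l2
      refine l3.congr_deriv ?_; symm
      norm_num
    have hts := hasDerivAt_iff_tendsto_slope.mp hder
    refine Filter.Tendsto.congr (fun x => ?_) hts
    rw [slope_def_field, hq]
    simp
  -- eventual facts
  have ev_pos : ∀ᶠ t in nhdsWithin (0:ℝ) (Set.Ioi 0), 0 < t :=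
    eventually_mem_nhdsWithin
  have ev_dne : ∀ᶠ t in nhdsWithin (0:ℝ) (Set.Ioi 0), d t ≠ 0 :=
    (((hdcont.tendsto 0).mono_left (nhdsWithin_le_nhds (s := Set.Ioi 0))).eventually_ne hd0ne)
  have hccont : Continuous c := by
    rw [hc]
    exact continuous_const.add (Complex.continuous_ofReal.mul continuous_const)
  have ev_mem : ∀ᶠ t in nhdsWithin (0:ℝ) (Set.Ioi 0), c t ∈ ball (0:ℂ) 1 := by
    have := ((hccont.tendsto 0).mono_left (nhdsWithin_le_nhds (s := Set.Ioi 0))).eventually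
      (isOpen_ball.mem_nhds (by rw [hc0]; exact ha))
    exact this
  have hvne : v ≠ 0 := by
    intro hcon
    rw [hcon, norm_zero] at hvnorm
    norm_num at hvnorm
  have ev_ρpos : ∀ᶠ t in nhdsWithin (0:ℝ) (Set.Ioi 0), 0 < ρ t := by
    filter_upwards [ev_pos, ev_dne] with t htpos htd
    rw [hρ_eq t]
    apply norm_pos_iff.mpr
    apply div_ne_zero _ htd
    exact mul_ne_zero (by exact_mod_cast ne_of_gt htpos) hvne
  have ev_ρlt1 : ∀ᶠ t in nhdsWithin (0:ℝ) (Set.Ioi 0), ρ t < 1 :=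
    hρcont.eventually (gt_mem_nhds (by norm_num : (0:ℝ) < 1))
  -- Tendsto ρ into punctured nhds
  have hρpunct : Filter.Tendsto ρ (nhdsWithin (0:ℝ) (Set.Ioi 0)) (nhdsWithin 0 {(0:ℝ)}ᶜ) := by
    rw [tendsto_nhdsWithin_iff]
    exact ⟨hρcont, ev_ρpos.mono (fun t ht => Set.mem_compl_singleton_iff.mpr (ne_of_gt ht))⟩
  have hqρ : Filter.Tendsto (fun t => q (ρ t)) (nhdsWithin (0:ℝ) (Set.Ioi 0)) (nhds 2) :=
    hqlim.comp hρpunct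
  -- limit of RHS/t
  have hR : Filter.Tendsto (fun t => lam * Real.log ((1+ρ t)/(1-ρ t)) / t)
      (nhdsWithin (0:ℝ) (Set.Ioi 0)) (nhds (lam * (2 * (1 / (1 - ‖a‖^2))))) := by
    have base : Filter.Tendsto (fun t => lam * (q (ρ t) * ‖v / d t‖))
        (nhdsWithin (0:ℝ) (Set.Ioi 0)) (nhds (lam * (2 * (1 / (1 - ‖a‖^2))))) :=
      (hqρ.mul hm).const_mul lam
    refine base.congr' ?_
    filter_upwards [ev_pos, ev_ρpos, ev_ρlt1] with t htpos hρpos hρlt1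
    have htne : t ≠ 0 := ne_of_gt htpos
    have hρt : ρ t = t * ‖v / d t‖ := by
      rw [hρ_eq t, mul_div_assoc, norm_mul, Complex.norm_real, Real.norm_eq_abs,
        _root_.abs_of_nonneg (le_of_lt htpos)]
    have hMt : ‖v / d t‖ = ρ t / t := by
      rw [hρt, mul_comm, mul_div_assoc, div_self htne, mul_one]
    have hcore : q (ρ t) * (ρ t / t) = (Real.log (1+ρ t) - Real.log (1-ρ t)) / t := by
      rw [hq]
      simp only
      rw [div_mul_div_comm, mul_comm (ρ t) t, mul_div_mul_right _ _ (ne_of_gt hρpos)]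
    rw [hMt, hcore, Real.log_div (by linarith) (by linarith), mul_div_assoc]
  -- limit of LHS/t
  have hslope := hasDerivAt_iff_tendsto_slope.mp hFd
  have hL : Filter.Tendsto (fun t => |F t - F 0| / t)
      (nhdsWithin (0:ℝ) (Set.Ioi 0)) (nhds (2 * ‖P‖)) := by
    have h1 : Filter.Tendsto (fun t => |slope F 0 t|) (nhdsWithin 0 {(0:ℝ)}ᶜ)
        (nhds |2 * ‖P‖|) := hslope.abs
    rw [_root_.abs_of_nonneg (by positivity)] at h1
    have h2 := h1.mono_left
      (nhdsWithin_mono 0 (fun x hx => Set.mem_compl_singleton_iff.mpr (ne_of_gt hx)))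
    refine h2.congr' ?_
    filter_upwards [ev_pos] with t htpos
    rw [slope_def_field, sub_zero, abs_div, _root_.abs_of_nonneg (le_of_lt htpos)]
  -- compare
  have hineq : ∀ᶠ t in nhdsWithin (0:ℝ) (Set.Ioi 0),
      |F t - F 0| / t ≤ lam * Real.log ((1+ρ t)/(1-ρ t)) / t := by
    filter_upwards [ev_pos, ev_mem] with t htpos htmem
    have h6 : |F t - F 0| ≤ lam * Real.log ((1 + ρ t)/(1 - ρ t)) := by
      have h7 := hyp (c t) htmem a ha
      simp only [hF, hc0]
      exact h7
    exact (div_le_div_iff_of_pos_right htpos).mpr h6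
  have hfin : 2 * ‖P‖ ≤ lam * (2 * (1 / (1 - ‖a‖^2))) :=
    le_of_tendsto_of_tendsto hL hR hineq
  have h8 : 2*‖P‖ * (1-‖a‖^2) ≤ lam * (2 * (1/(1-‖a‖^2))) * (1-‖a‖^2) :=
    mul_le_mul_of_nonneg_right hfin (le_of_lt ha2)
  have h9 : lam * (2 * (1/(1-‖a‖^2))) * (1-‖a‖^2) = 2*lam := by
    field_simp
  nlinarith [h8, h9]

theorem stmt14 (h g : ℂ → ℂ) (hf : SPH h g) (lam : ℝ)
    (h0 : h 0 = 0) (h1 : deriv h 0 = 1) :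
    (∀ z ∈ Metric.ball (0 : ℂ) 1, (1 - ‖z‖ ^ 2) * ‖PH h g z‖ ≤ lam) ↔
      ∀ z ∈ Metric.ball (0 : ℂ) 1, ∀ z₀ ∈ Metric.ball (0 : ℂ) 1,
        |Real.log (‖deriv h z‖ ^ 2 - ‖deriv g z‖ ^ 2) -
            Real.log (‖deriv h z₀‖ ^ 2 - ‖deriv g z₀‖ ^ 2)| ≤
          lam * Real.log ((1 + ‖(z - z₀) / (1 - (starRingEnd ℂ) z₀ * z)‖) /
            (1 - ‖(z - z₀) / (1 - (starRingEnd ℂ) z₀ * z)‖)) := by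
  obtain ⟨hh, hg, hg0, hlt⟩ := hf
  constructor
  · intro hb z hz z₀ hz₀
    exact forward hh hg hlt hb (mem_ball_zero_iff.mp hz) (mem_ball_zero_iff.mp hz₀)
  · intro hyp z hz
    have hlam : 0 ≤ lam := by
      have hmem : ((1/2 : ℝ) : ℂ) ∈ ball (0:ℂ) 1 := by
        rw [mem_ball_zero_iff, Complex.norm_real, Real.norm_eq_abs,
          _root_.abs_of_nonneg (by norm_num : (0:ℝ) ≤ 1/2)]
        norm_num
      have h0m : (0:ℂ) ∈ ball (0:ℂ) 1 := by
        rw [mem_ball_zero_iff]; norm_num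
      have h2 := hyp ((1/2 : ℝ) : ℂ) hmem 0 h0m
      have e : ‖(((1/2:ℝ):ℂ) - 0) / (1 - (starRingEnd ℂ) 0 * ((1/2:ℝ):ℂ))‖ = 1/2 := by
        rw [sub_zero, map_zero, zero_mul, sub_zero, div_one, Complex.norm_real,
          Real.norm_eq_abs, _root_.abs_of_nonneg (by norm_num : (0:ℝ) ≤ 1/2)]
      rw [e] at h2
      have e2 : ((1:ℝ) + 1/2) / (1 - 1/2) = 3 := by norm_num
      rw [e2] at h2
      nlinarith [abs_nonneg (Real.log (‖deriv h (((1/2:ℝ):ℂ))‖^2 - ‖deriv g (((1/2:ℝ):ℂ))‖^2)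
          - Real.log (‖deriv h 0‖^2 - ‖deriv g 0‖^2)),
        Real.log_pos (by norm_num : (1:ℝ) < 3), h2]
    exact backward hh hg hlt hlam hyp hz
end
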